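/- arXiv:1210.7366 — 4 statements merged into one kernel-verified Lean document; each statement's English description precedes it below -/
import Mathlib

section
/- Let d ≥ 1, let σ be a permutation of {1,…,d}, let U be a d×d complex unitary matrix, set m = d(d−1)/2, and let μ_1,…,μ_m be complex numbers with |μ_i| = 1 for all i and μ_1 μ_2 ⋯ μ_m = det(U). Then there exist unitary matrices A_1,…,A_m with U = A_1 ⋯ A_m such that each A_i agrees with the d×d identity matrix in every entry outside the 2×2 principal submatrix with row and column indices σ(k_i) and σ(k_i + 1) for some k_i ∈ {1,…,d−1}, and det(A_i) = μ_i for every i = 1,…,m. -/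
/-- `A` agrees with the identity matrix in every entry outside the 2×2 principal
submatrix with row and column indices `p` and `q` (a "two-level" pattern). -/
def IsTwoLevelOn {ι R : Type*} [DecidableEq ι] [Zero R] [One R]
    (A : Matrix ι ι R) (p q : ι) : Prop :=
  ∀ i j, (i ≠ p ∧ i ≠ q) ∨ (j ≠ p ∧ j ≠ q) → A i j = if i = j then 1 else 0

set_option maxHeartbeats 1600000

namespace TLaux
open Matrix Complex

variable {n : ℕ}

/-- two-level matrix with block `[a b; c e]` at `(p, q)`. -/
def twoLevel (p q : Fin n) (a b c e : ℂ) : Matrix (Fin n) (Fin n) ℂ :=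
  Matrix.of fun i j =>
    if i = p then (if j = p then a else if j = q then b else 0)
    else if i = q then (if j = p then c else if j = q then e else 0)
    else if i = j then 1 else 0

def TLP (d : ℕ) (z : ℂ) (A : Matrix (Fin d) (Fin d) ℂ) : Prop :=
  A ∈ Matrix.unitaryGroup (Fin d) ℂ ∧
  (∃ k, ∃ hk : k + 1 < d, IsTwoLevelOn A ⟨k, Nat.lt_of_succ_lt hk⟩ ⟨k+1, hk⟩) ∧
  A.det = z

variable {p q : Fin n} {a b c e a' b' c' e' : ℂ}

lemma twoLevel_isTwoLevelOn : IsTwoLevelOn (twoLevel p q a b c e) p q := by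
  intro i j h
  rcases h with ⟨h1, h2⟩ | ⟨h1, h2⟩
  · simp [twoLevel, h1, h2]
  · unfold twoLevel
    by_cases hip : i = p
    · subst hip; simp [h1, h2, Ne.symm h1]
    · by_cases hiq : i = q
      · subst hiq; simp [h1, h2, Ne.symm h2]
      · simp [hip, hiq]

lemma twoLevel_mul_apply (hpq : p ≠ q) (M : Matrix (Fin n) (Fin n) ℂ) (i j : Fin n) :
    (twoLevel p q a b c e * M) i j =
      if i = p then a * M p j + b * M q j
      else if i = q then c * M p j + e * M q j
      else M i j := by
  rw [Matrix.mul_apply]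
  by_cases hip : i = p
  · rw [Fintype.sum_eq_add p q hpq ?_]
    · simp [twoLevel, hpq, Ne.symm hpq, hip]
    · intro k ⟨hk1, hk2⟩; simp [twoLevel, hip, hk1, hk2]
  · by_cases hiq : i = q
    · rw [Fintype.sum_eq_add p q hpq ?_]
      · simp [twoLevel, hpq, Ne.symm hpq, hip, hiq]
      · intro k ⟨hk1, hk2⟩; simp [twoLevel, hiq, hk1, hk2, hip, Ne.symm hpq]
    · rw [Fintype.sum_eq_single i ?_]
      · simp [twoLevel, hip, hiq]
      · intro k hk; simp [twoLevel, hip, hiq, hk, Ne.symm hk]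

lemma conjTranspose_twoLevel :
    (twoLevel p q a b c e)ᴴ = twoLevel p q (star a) (star c)
      (star b) (star e) := by
  ext i j
  unfold twoLevel
  rw [Matrix.conjTranspose_apply]
  by_cases hip : i = p <;> by_cases hiq : i = q <;>
    by_cases hjp : j = p <;> by_cases hjq : j = q <;>
    simp_all [eq_comm]

lemma updateRow_comm' (M : Matrix (Fin n) (Fin n) ℂ) (hpq : p ≠ q) (u v : Fin n → ℂ) :
    (M.updateRow p u).updateRow q v = (M.updateRow q v).updateRow p u := by
  ext i j
  by_cases hip : i = p <;> by_cases hiq : i = q <;>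
    simp_all [Matrix.updateRow_apply]

lemma one_row (u : Fin n) : (1 : Matrix (Fin n) (Fin n) ℂ) u = Pi.single u 1 := by
  ext j; simp [Matrix.one_apply, Pi.single_apply, eq_comm]

lemma det_twoLevel (hpq : p ≠ q) : (twoLevel p q a b c e).det = a * e - b * c := by
  have h : twoLevel p q a b c e =
      ((1 : Matrix (Fin n) (Fin n) ℂ).updateRow p
        (a • (Pi.single p 1 : Fin n → ℂ) + b • (Pi.single q 1 : Fin n → ℂ))).updateRow q
        (c • (Pi.single p 1 : Fin n → ℂ) + e • (Pi.single q 1 : Fin n → ℂ)) := by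
    ext i j
    by_cases hip : i = p <;> by_cases hiq : i = q <;>
      by_cases hjp : j = p <;> by_cases hjq : j = q <;>
      simp_all [twoLevel, Matrix.updateRow_apply, Pi.single_apply, Matrix.one_apply]
  have hMp0 : ∀ u v : Fin n, (((1 : Matrix (Fin n) (Fin n) ℂ).updateRow p
      (Pi.single u 1)).updateRow q (Pi.single v 1)) p = Pi.single u 1 := by
    intro u v; simp [Matrix.updateRow_apply, hpq]
  have hMq0 : ∀ u v : Fin n, (((1 : Matrix (Fin n) (Fin n) ℂ).updateRow p
      (Pi.single u 1)).updateRow q (Pi.single v 1)) q = Pi.single v 1 := by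
    intro u v; simp [Matrix.updateRow_apply]
  have detEpp : (((1 : Matrix (Fin n) (Fin n) ℂ).updateRow p
      (Pi.single p 1)).updateRow q (Pi.single p 1)).det = 0 :=
    Matrix.det_zero_of_row_eq hpq ((hMp0 p p).trans (hMq0 p p).symm)
  have detEqq : (((1 : Matrix (Fin n) (Fin n) ℂ).updateRow p
      (Pi.single q 1)).updateRow q (Pi.single q 1)).det = 0 :=
    Matrix.det_zero_of_row_eq hpq ((hMp0 q q).trans (hMq0 q q).symm)
  have detEpq : (((1 : Matrix (Fin n) (Fin n) ℂ).updateRow p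
      (Pi.single p 1)).updateRow q (Pi.single q 1)).det = 1 := by
    rw [← one_row, ← one_row, Matrix.updateRow_eq_self, Matrix.updateRow_eq_self,
      Matrix.det_one]
  have detEqp : (((1 : Matrix (Fin n) (Fin n) ℂ).updateRow p
      (Pi.single q 1)).updateRow q (Pi.single p 1)).det = -1 := by
    have hswap : ((1 : Matrix (Fin n) (Fin n) ℂ).updateRow p
        (Pi.single q 1)).updateRow q (Pi.single p 1) = (Equiv.swap p q).permMatrix ℂ := by
      ext i j
      have hperm : (Equiv.Perm.permMatrix ℂ (Equiv.swap p q)) i j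
          = if Equiv.swap p q i = j then 1 else 0 := by
        simp [Equiv.Perm.permMatrix, PEquiv.toMatrix_apply, Equiv.toPEquiv_apply,
          Option.mem_def, eq_comm]
      rw [hperm, Matrix.updateRow_apply, Matrix.updateRow_apply]
      by_cases hip : i = p <;> by_cases hiq : i = q
      · exact absurd (hip.symm.trans hiq) hpq
      · subst hip
        simp [hiq, Equiv.swap_apply_left, Pi.single_apply, eq_comm]
      · subst hiq
        simp [Equiv.swap_apply_right, Pi.single_apply, eq_comm]
      · simp [hip, hiq, Equiv.swap_apply_of_ne_of_ne hip hiq, Matrix.one_apply]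
    rw [hswap, Matrix.det_permutation, Equiv.Perm.sign_swap hpq]
    simp
  rw [h, Matrix.det_updateRow_add, Matrix.det_updateRow_smul, Matrix.det_updateRow_smul,
    updateRow_comm' _ hpq, updateRow_comm' _ hpq,
    Matrix.det_updateRow_add, Matrix.det_updateRow_smul, Matrix.det_updateRow_smul,
    Matrix.det_updateRow_add, Matrix.det_updateRow_smul, Matrix.det_updateRow_smul]
  rw [updateRow_comm' _ (Ne.symm hpq), updateRow_comm' _ (Ne.symm hpq),
    updateRow_comm' _ (Ne.symm hpq), updateRow_comm' _ (Ne.symm hpq)]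
  rw [detEpp, detEqp, detEpq, detEqq]
  ring

lemma twoLevel_one (hpq : p ≠ q) : twoLevel p q 1 0 0 1 = (1 : Matrix (Fin n) (Fin n) ℂ) := by
  have hqp : ¬ q = p := fun h => hpq h.symm
  ext i j
  unfold twoLevel
  by_cases hip : i = p <;> by_cases hiq : i = q <;>
    by_cases hjp : j = p <;> by_cases hjq : j = q <;>
    simp_all [Matrix.one_apply, eq_comm]

lemma twoLevel_mul_twoLevel (hpq : p ≠ q) :
    twoLevel p q a b c e * twoLevel p q a' b' c' e' =
      twoLevel p q (a*a'+b*c') (a*b'+b*e') (c*a'+e*c') (c*b'+e*e') := by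
  have hqp : ¬ q = p := fun h => hpq h.symm
  ext i j
  rw [twoLevel_mul_apply hpq]
  unfold twoLevel
  by_cases hip : i = p <;> by_cases hiq : i = q <;>
    by_cases hjp : j = p <;> by_cases hjq : j = q <;>
    simp_all [hqp] <;> ring

lemma twoLevel_mem_unitary (hpq : p ≠ q)
    (h1 : a * star a + b * star b = 1) (h2 : c * star c + e * star e = 1)
    (h3 : a * star c + b * star e = 0) :
    twoLevel p q a b c e ∈ Matrix.unitaryGroup (Fin n) ℂ := by
  rw [Matrix.mem_unitaryGroup_iff]
  have hstar : star (twoLevel p q a b c e) = twoLevel p q (star a) (star c) (star b) (star e) :=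
    conjTranspose_twoLevel
  have h3' : c * star a + e * star b = 0 := by
    have := congrArg star h3
    simpa [mul_comm] using this
  rw [hstar, twoLevel_mul_twoLevel hpq, h1, h2,
    show a * star c + b * star e = 0 from h3, show c * star a + e * star b = 0 from h3']
  exact twoLevel_one hpq

lemma givens (x y μ : ℂ) (hμ : ‖μ‖ = 1) :
    ∃ a b c e : ℂ,
      (a * star a + b * star b = 1 ∧ c * star c + e * star e = 1 ∧
        a * star c + b * star e = 0) ∧
      a * e - b * c = μ ∧ c * x + e * y = 0 ∧
      a * x + b * y = (Real.sqrt (normSq x + normSq y) : ℝ) := by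
  have hμ2 : μ * (starRingEnd ℂ) μ = 1 := by
    rw [Complex.mul_conj, Complex.normSq_eq_norm_sq, hμ]
    norm_num
  by_cases h0 : x = 0 ∧ y = 0
  · obtain ⟨rfl, rfl⟩ := h0
    refine ⟨1, 0, 0, μ, ⟨by simp, ?_, by simp⟩, by simp, by simp, by simp⟩
    simpa [RCLike.star_def] using hμ2
  · have hpos : 0 < normSq x + normSq y := by
      rcases not_and_or.mp h0 with h | h
      · linarith [Complex.normSq_pos.mpr h, normSq_nonneg y]
      · linarith [Complex.normSq_pos.mpr h, normSq_nonneg x]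
    set r : ℝ := Real.sqrt (normSq x + normSq y) with hr
    have hrpos : 0 < r := Real.sqrt_pos.mpr hpos
    have hrne : (r : ℂ) ≠ 0 := by exact_mod_cast ne_of_gt hrpos
    have hr2 : (r : ℂ) * r = (normSq x : ℂ) + (normSq y : ℂ) := by
      rw [← Complex.ofReal_mul, Real.mul_self_sqrt hpos.le]
      push_cast; ring
    have hx : x * (starRingEnd ℂ) x = (normSq x : ℂ) := Complex.mul_conj x
    have hy : y * (starRingEnd ℂ) y = (normSq y : ℂ) := Complex.mul_conj y
    refine ⟨(starRingEnd ℂ) x / r, (starRingEnd ℂ) y / r, -μ * y / r, μ * x / r,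
      ⟨?_, ?_, ?_⟩, ?_, ?_, ?_⟩ <;>
      (try simp only [RCLike.star_def, map_div₀, map_neg, _root_.map_mul, Complex.conj_conj,
        Complex.conj_ofReal]) <;>
      field_simp
    · linear_combination hx + hy - hr2
    · linear_combination (y * (starRingEnd ℂ) y + x * (starRingEnd ℂ) x) * hμ2 + hx + hy - hr2
    · ring
    · linear_combination μ * hx + μ * hy - μ * hr2
    · ring
    · linear_combination hx + hy - hr2

/-- embed an `n×n` matrix as `1 ⊕ V` in `(n+1)×(n+1)`. -/
def lift (V : Matrix (Fin n) (Fin n) ℂ) : Matrix (Fin (n+1)) (Fin (n+1)) ℂ :=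
  Matrix.of fun i j =>
    if hi : i = 0 then (if j = 0 then 1 else 0)
    else if hj : j = 0 then 0
    else V (i.pred hi) (j.pred hj)

lemma lift_apply_succ (V : Matrix (Fin n) (Fin n) ℂ) (i j : Fin n) :
    lift V i.succ j.succ = V i j := by
  simp [lift, Fin.succ_ne_zero]

lemma lift_apply_zero_left (V : Matrix (Fin n) (Fin n) ℂ) (j : Fin (n+1)) :
    lift V 0 j = if j = 0 then 1 else 0 := by simp [lift]

lemma lift_apply_zero_right (V : Matrix (Fin n) (Fin n) ℂ) (i : Fin (n+1)) (hi : i ≠ 0) :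
    lift V i 0 = 0 := by simp [lift, hi]

lemma zero_ne_succ (i : Fin n) : (0 : Fin (n+1)) ≠ i.succ := (Fin.succ_ne_zero i).symm

lemma lift_one : lift (1 : Matrix (Fin n) (Fin n) ℂ) = 1 := by
  ext i j
  rcases Fin.eq_zero_or_eq_succ i with rfl | ⟨i', rfl⟩ <;>
    rcases Fin.eq_zero_or_eq_succ j with rfl | ⟨j', rfl⟩ <;>
    simp [lift, Fin.succ_ne_zero, zero_ne_succ, Matrix.one_apply, Fin.succ_inj]

lemma lift_mul (V W : Matrix (Fin n) (Fin n) ℂ) : lift V * lift W = lift (V * W) := by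
  ext i j
  rw [Matrix.mul_apply, Fin.sum_univ_succ]
  rcases Fin.eq_zero_or_eq_succ i with rfl | ⟨i', rfl⟩
  · rcases Fin.eq_zero_or_eq_succ j with rfl | ⟨j', rfl⟩ <;>
      simp [lift, Fin.succ_ne_zero]
  · rcases Fin.eq_zero_or_eq_succ j with rfl | ⟨j', rfl⟩
    · simp [lift, Fin.succ_ne_zero]
    · rw [lift_apply_zero_right _ _ (Fin.succ_ne_zero i'), lift_apply_succ, Matrix.mul_apply]
      simp only [lift_apply_succ]
      simp

lemma lift_star (V : Matrix (Fin n) (Fin n) ℂ) : star (lift V) = lift (star V) := by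
  ext i j
  show (lift V)ᴴ i j = _
  rw [Matrix.conjTranspose_apply]
  rcases Fin.eq_zero_or_eq_succ i with rfl | ⟨i', rfl⟩ <;>
    rcases Fin.eq_zero_or_eq_succ j with rfl | ⟨j', rfl⟩ <;>
    simp [lift, Fin.succ_ne_zero, Matrix.conjTranspose_apply]

lemma lift_unitary {V : Matrix (Fin n) (Fin n) ℂ} (hV : V ∈ Matrix.unitaryGroup (Fin n) ℂ) :
    lift V ∈ Matrix.unitaryGroup (Fin (n+1)) ℂ := by
  rw [Matrix.mem_unitaryGroup_iff] at hV ⊢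
  rw [lift_star, lift_mul, hV, lift_one]

lemma lift_det (V : Matrix (Fin n) (Fin n) ℂ) : (lift V).det = V.det := by
  rw [Matrix.det_succ_row_zero]
  rw [Fin.sum_univ_succ]
  have h0 : ∀ j : Fin n, lift V 0 j.succ = 0 := fun j => by
    simp [lift, Fin.succ_ne_zero]
  simp only [h0, lift_apply_zero_left, if_pos rfl]
  have h1 : (lift V).submatrix Fin.succ Fin.succ = V := by
    ext i j
    rw [Matrix.submatrix_apply, lift_apply_succ]
  simp [Fin.succAbove_zero, h1]

lemma lift_isTwoLevelOn {V : Matrix (Fin n) (Fin n) ℂ} {k : ℕ} (hk : k + 1 < n)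
    (h : IsTwoLevelOn V ⟨k, Nat.lt_of_succ_lt hk⟩ ⟨k+1, hk⟩) :
    IsTwoLevelOn (lift V) ⟨k+1, by omega⟩ ⟨k+2, by omega⟩ := by
  intro i j hij
  rcases Fin.eq_zero_or_eq_succ i with rfl | ⟨i', rfl⟩
  · rw [lift_apply_zero_left]
    by_cases hj : j = 0
    · simp [hj]
    · simp [hj, Ne.symm hj]
  · rcases Fin.eq_zero_or_eq_succ j with rfl | ⟨j', rfl⟩
    · rw [lift_apply_zero_right _ _ (Fin.succ_ne_zero i')]
      rw [if_neg (Fin.succ_ne_zero i')]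
    · rw [lift_apply_succ]
      have hne : ∀ (m : ℕ) (hm : m < n) (w : Fin n),
          w.succ ≠ (⟨m+1, by omega⟩ : Fin (n+1)) ↔ w ≠ ⟨m, hm⟩ := by
        intro m hm w
        rw [not_iff_not]
        simp only [Fin.ext_iff, Fin.val_succ]
        omega
      have := h i' j' ?_
      · rw [this]
        simp [Fin.succ_inj]
      · rcases hij with ⟨h1, h2⟩ | ⟨h1, h2⟩
        · left
          exact ⟨(hne k (by omega) i').mp h1, (hne (k+1) hk i').mp h2⟩
        · right
          exact ⟨(hne k (by omega) j').mp h1, (hne (k+1) hk j').mp h2⟩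

lemma clearing (n : ℕ) (U : Matrix (Fin (n+1)) (Fin (n+1)) ℂ)
    (hU : U ∈ Matrix.unitaryGroup (Fin (n+1)) ℂ)
    (ν : Fin n → ℂ) (hν : ∀ i, ‖ν i‖ = 1) :
    ∀ t, t ≤ n →
    ∃ (L : List (Matrix (Fin (n+1)) (Fin (n+1)) ℂ)) (W : Matrix (Fin (n+1)) (Fin (n+1)) ℂ),
      L.length = t ∧ U = L.prod * W ∧ W ∈ Matrix.unitaryGroup (Fin (n+1)) ℂ ∧
      (∀ i (hi : i < L.length) (hi2 : i < n), TLP (n+1) (ν ⟨i, hi2⟩) (L[i])) ∧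
      (∀ j : Fin (n+1), n - t < j.val → W j 0 = 0) ∧
      (1 ≤ t → (W ⟨n - t, by omega⟩ 0).im = 0 ∧ 0 ≤ (W ⟨n - t, by omega⟩ 0).re) := by
  intro t
  induction t with
  | zero =>
    intro _
    exact ⟨[], U, rfl, by simp, hU, fun i hi _ => absurd hi (by simp), fun j hj => absurd hj (by omega),
      fun h => absurd h (by omega)⟩
  | succ t ih =>
    intro htn
    obtain ⟨L, W, hlen, hprod, hWu, hL, hcol, _⟩ := ih (by omega)
    obtain ⟨p, hp⟩ : ∃ p : Fin (n+1), p.val = n - (t+1) := ⟨⟨_, by omega⟩, rfl⟩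
    obtain ⟨q, hq⟩ : ∃ q : Fin (n+1), q.val = n - t := ⟨⟨_, by omega⟩, rfl⟩
    have hpq : p ≠ q := fun h => by
      rw [Fin.ext_iff, hp, hq] at h; omega
    obtain ⟨a, b, c, e, ⟨h1, h2, h3⟩, hdet, hzero, hreal⟩ :=
      givens (W p 0) (W q 0) (star (ν ⟨t, by omega⟩)) (by
        rw [RCLike.star_def, Complex.norm_conj]
        exact hν ⟨t, by omega⟩)
    have hGu : twoLevel p q a b c e ∈ Matrix.unitaryGroup (Fin (n+1)) ℂ :=
      twoLevel_mem_unitary hpq h1 h2 h3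
    have hAu : (twoLevel p q a b c e)ᴴ ∈ Matrix.unitaryGroup (Fin (n+1)) ℂ :=
      Unitary.star_mem hGu
    have hWu' : twoLevel p q a b c e * W ∈ Matrix.unitaryGroup (Fin (n+1)) ℂ :=
      Submonoid.mul_mem _ hGu hWu
    have hAW : (twoLevel p q a b c e)ᴴ * (twoLevel p q a b c e * W) = W := by
      have h0 : (twoLevel p q a b c e)ᴴ * twoLevel p q a b c e = 1 :=
        Matrix.mem_unitaryGroup_iff'.mp hGu
      rw [← Matrix.mul_assoc, h0, Matrix.one_mul]
    have hmulW : ∀ j i : Fin (n+1), (twoLevel p q a b c e * W) j i =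
        if j = p then a * W p i + b * W q i
        else if j = q then c * W p i + e * W q i
        else W j i := fun j i => twoLevel_mul_apply hpq W j i
    refine ⟨L ++ [(twoLevel p q a b c e)ᴴ], twoLevel p q a b c e * W, by simp [hlen], ?_, hWu',
      ?_, ?_, ?_⟩
    · rw [List.prod_append, List.prod_singleton, Matrix.mul_assoc, hAW, hprod]
    · intro i hi hi2
      simp only [List.length_append, List.length_singleton, hlen] at hi
      by_cases hit : i < t
      · rw [List.getElem_append_left (by omega)]
        exact hL i (by omega) hi2
      · have hit' : i = t := by omega
        rw [List.getElem_append_right (by omega)]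
        simp only [List.getElem_singleton]
        refine ⟨hAu, ⟨n - (t+1), by omega, ?_⟩, ?_⟩
        · rw [conjTranspose_twoLevel]
          have hpeq : (⟨n - (t+1), by omega⟩ : Fin (n+1)) = p := Fin.ext (by simp [hp])
          have hqeq : (⟨n - (t+1) + 1, by omega⟩ : Fin (n+1)) = q := Fin.ext (by simp [hq]; omega)
          rw [hpeq, hqeq]
          exact twoLevel_isTwoLevelOn
        · have hieq : (⟨i, hi2⟩ : Fin n) = ⟨t, by omega⟩ := Fin.ext (by simp [hit'])
          rw [hieq, Matrix.det_conjTranspose, det_twoLevel hpq, hdet]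
          simp
    · intro j hj
      rw [hmulW]
      by_cases hjp : j = p
      · exfalso; rw [hjp, hp] at hj; omega
      · by_cases hjq : j = q
        · rw [if_neg hjp, if_pos hjq]; exact hzero
        · rw [if_neg hjp, if_neg hjq]
          apply hcol
          have : j.val ≠ n - t := fun h => hjq (Fin.ext (by rw [hq, h]))
          omega
    · intro _
      have hpeq : (⟨n - (t+1), by omega⟩ : Fin (n+1)) = p := Fin.ext (by simp [hp])
      rw [hpeq, hmulW, if_pos rfl, hreal]
      refine ⟨by simp, by simp⟩

lemma lift_inj {X Y : Matrix (Fin n) (Fin n) ℂ} (h : lift X = lift Y) : X = Y := by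
  ext i j
  rw [← lift_apply_succ X i j, h, lift_apply_succ]

lemma lift_list_prod (l : List (Matrix (Fin n) (Fin n) ℂ)) :
    (l.map lift).prod = lift l.prod := by
  induction l with
  | nil =>
    simp only [List.map_nil, List.prod_nil]
    exact lift_one.symm
  | cons a t ih => simp [List.prod_cons, ih, lift_mul]

lemma det_list_prod (l : List (Matrix (Fin n) (Fin n) ℂ)) :
    l.prod.det = (l.map Matrix.det).prod := by
  induction l with
  | nil => simp
  | cons a t ih => simp [Matrix.det_mul, ih]

lemma prod_ne_zero' {l : List ℂ} (h : ∀ z ∈ l, ‖z‖ = 1) : l.prod ≠ 0 := by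
  induction l with
  | nil => simp
  | cons a t ih =>
    rw [List.prod_cons]
    refine mul_ne_zero ?_ (ih fun z hz => h z (List.mem_cons_of_mem a hz))
    intro h0
    have := h a (List.mem_cons_self)
    rw [h0] at this
    simp at this

lemma key : ∀ (d : ℕ) (U : Matrix (Fin d) (Fin d) ℂ), U ∈ Matrix.unitaryGroup (Fin d) ℂ →
    ∀ μl : List ℂ, μl.length = d * (d-1) / 2 → (∀ z ∈ μl, ‖z‖ = 1) →
    μl.prod = U.det →
    ∃ L : List (Matrix (Fin d) (Fin d) ℂ), L.length = μl.length ∧ U = L.prod ∧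
      ∀ i (hi : i < L.length) (hi2 : i < μl.length), TLP d (μl[i]) (L[i]) := by
  intro d
  induction d using Nat.strong_induction_on with
  | _ d IH =>
  match d with
  | 0 =>
    intro U hU μl hlen hmem hprod
    have : μl = [] := List.length_eq_zero_iff.mp (by simpa using hlen)
    subst this
    refine ⟨[], rfl, ?_, fun i hi _ => absurd hi (by simp)⟩
    ext i j
    exact i.elim0
  | 1 =>
    intro U hU μl hlen hmem hprod
    have : μl = [] := List.length_eq_zero_iff.mp (by simpa using hlen)
    subst this
    have h00 : U 0 0 = 1 := by
      rw [← Matrix.det_fin_one U, ← hprod, List.prod_nil]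
    refine ⟨[], rfl, ?_, fun i hi _ => absurd hi (by simp)⟩
    ext i j
    rw [Fin.eq_zero i, Fin.eq_zero j, List.prod_nil, h00, Matrix.one_apply_eq]
  | (n+2) =>
    intro U hU μl hlen hmem hprod
    have hdvd : 2 ∣ (n+1) * n := (by simpa [mul_comm] using Nat.even_mul_succ_self n : Even ((n+1)*n)).two_dvd
    have hmulexp : (n+2) * ((n+2)-1) = (n+1)*n + 2*(n+1) := by
      show (n+2)*(n+1) = (n+1)*n + 2*(n+1); ring
    have e1 : μl.length = (n+1) + (n+1) * n / 2 := by
      rw [hlen]; omega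
    have hlenge : n + 1 ≤ μl.length := by omega
    set ν : Fin (n+1) → ℂ := fun i => μl[i.val]'(by omega) with hν_def
    have hν : ∀ i, ‖ν i‖ = 1 := fun i => hmem _ (List.getElem_mem _)
    obtain ⟨L, W, hlenL, hprodLW, hWu, hL, hcol, hlast⟩ :=
      clearing (n+1) U hU ν hν (n+1) le_rfl
    -- W has first column e₀ and entry (0,0) = 1
    have hcol0 : ∀ j : Fin (n+2), j ≠ 0 → W j 0 = 0 := by
      intro j hj
      apply hcol
      simp only [Nat.sub_self]
      rcases Fin.eq_zero_or_eq_succ j with rfl | ⟨j', rfl⟩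
      · exact absurd rfl hj
      · simp [Fin.val_succ]
    have hW00 : W 0 0 = 1 := by
      obtain ⟨him, hre⟩ := hlast (by omega)
      have hsm : Wᴴ * W = 1 := Matrix.mem_unitaryGroup_iff'.mp hWu
      have h1 : (Wᴴ * W) 0 0 = 1 := by rw [hsm]; simp
      rw [Matrix.mul_apply, Fintype.sum_eq_single 0 ?side] at h1
      case side =>
        intro i hi
        rw [hcol0 i hi, mul_zero]
      rw [Matrix.conjTranspose_apply, RCLike.star_def, mul_comm, Complex.mul_conj] at h1
      have hns : Complex.normSq (W 0 0) = 1 := by exact_mod_cast h1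
      simp only [Nat.sub_self, Fin.mk_zero] at him hre
      rw [Complex.normSq_apply, him] at hns
      have : (W 0 0).re = 1 := by nlinarith
      exact Complex.ext (by simpa using this) (by simpa using him)
    have hrow0 : ∀ j : Fin (n+2), W 0 j = if j = 0 then 1 else 0 := by
      intro j
      have hsm : Wᴴ * W = 1 := Matrix.mem_unitaryGroup_iff'.mp hWu
      have h1 : (Wᴴ * W) 0 j = if j = 0 then 1 else 0 := by
        rw [hsm, Matrix.one_apply]
        by_cases h : j = 0 <;> simp [h, eq_comm]
      rw [Matrix.mul_apply, Fintype.sum_eq_single 0 ?side2] at h1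
      case side2 =>
        intro i hi
        rw [Matrix.conjTranspose_apply, hcol0 i hi]
        simp
      rw [Matrix.conjTranspose_apply, hW00] at h1
      simpa using h1
    set V : Matrix (Fin (n+1)) (Fin (n+1)) ℂ := W.submatrix Fin.succ Fin.succ with hV_def
    have hWlift : W = lift V := by
      ext i j
      rcases Fin.eq_zero_or_eq_succ i with rfl | ⟨i', rfl⟩
      · rw [lift_apply_zero_left, hrow0]
      · rcases Fin.eq_zero_or_eq_succ j with rfl | ⟨j', rfl⟩
        · rw [lift_apply_zero_right _ _ (Fin.succ_ne_zero i'), hcol0 _ (Fin.succ_ne_zero i')]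
        · rw [lift_apply_succ]
          rfl
    have hVu : V ∈ Matrix.unitaryGroup (Fin (n+1)) ℂ := by
      rw [Matrix.mem_unitaryGroup_iff']
      apply lift_inj
      rw [← lift_mul, ← lift_star, ← hWlift, lift_one]
      exact Matrix.mem_unitaryGroup_iff'.mp hWu
    -- determinant bookkeeping
    have hmapdet : L.map Matrix.det = μl.take (n+1) := by
      apply List.ext_getElem
      · simp [hlenL, hlenge]
      · intro i h1 h2
        rw [List.getElem_map, List.getElem_take]
        exact (hL i (by simpa [hlenL] using h1) (by simp [hlenL] at h1; omega)).2.2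
    have hdetV : (μl.drop (n+1)).prod = V.det := by
      have h1 : μl.prod = (μl.take (n+1)).prod * (μl.drop (n+1)).prod := by
        rw [← List.prod_append, List.take_append_drop]
      have h2 : U.det = (μl.take (n+1)).prod * V.det := by
        rw [hprodLW, Matrix.det_mul, det_list_prod, hmapdet, hWlift, lift_det]
      have h3 := h1.symm.trans (hprod.trans h2)
      have h4 : (μl.take (n+1)).prod ≠ 0 :=
        prod_ne_zero' fun z hz => hmem z (List.take_sublist _ _ |>.mem hz)
      exact mul_left_cancel₀ h4 h3
    obtain ⟨Lv, hlenLv, hVprod, hLv⟩ := IH (n+1) (by omega) V hVu (μl.drop (n+1))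
      (by simp [e1]) (fun z hz => hmem z (List.drop_sublist _ _ |>.mem hz)) hdetV
    refine ⟨L ++ Lv.map lift, ?_, ?_, ?_⟩
    · simp only [List.length_append, List.length_map, hlenL, hlenLv, List.length_drop]
      omega
    · rw [List.prod_append, lift_list_prod, ← hVprod, ← hWlift, hprodLW]
    · intro i hi hi2
      by_cases hilt : i < n + 1
      · rw [List.getElem_append_left (by omega : i < L.length)]
        exact hL i (by omega) (by omega)
      · rw [List.getElem_append_right (by omega : L.length ≤ i)]
        have hlt : i - L.length < Lv.length := by
          simp only [List.length_append, List.length_map] at hi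
          omega
        rw [List.getElem_map]
        obtain ⟨hu, ⟨k, hk, htl⟩, hdet⟩ := hLv (i - L.length) hlt (by rw [hlenLv] at hlt; exact hlt)
        refine ⟨lift_unitary hu, ⟨k+1, by omega, lift_isTwoLevelOn hk htl⟩, ?_⟩
        rw [lift_det, hdet, List.getElem_drop]
        congr 1
        rw [hlenL]
        omega

variable {d : ℕ}

lemma submatrix_star (e : Fin d ≃ Fin d) (A : Matrix (Fin d) (Fin d) ℂ) :
    star (A.submatrix ⇑e ⇑e) = (star A).submatrix ⇑e ⇑e := by
  ext i j
  simp [Matrix.star_apply, Matrix.submatrix_apply]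

lemma submatrix_unitary (e : Fin d ≃ Fin d) {A : Matrix (Fin d) (Fin d) ℂ}
    (hA : A ∈ Matrix.unitaryGroup (Fin d) ℂ) :
    A.submatrix ⇑e ⇑e ∈ Matrix.unitaryGroup (Fin d) ℂ := by
  rw [Matrix.mem_unitaryGroup_iff] at hA ⊢
  rw [submatrix_star, Matrix.submatrix_mul_equiv, hA, Matrix.submatrix_one_equiv]

lemma submatrix_list_prod (e : Fin d ≃ Fin d) (l : List (Matrix (Fin d) (Fin d) ℂ)) :
    (l.map (fun B => B.submatrix ⇑e ⇑e)).prod = l.prod.submatrix ⇑e ⇑e := by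
  induction l with
  | nil => simp only [List.map_nil, List.prod_nil]; exact (Matrix.submatrix_one_equiv e).symm
  | cons a t ih => simp only [List.map_cons, List.prod_cons, ih, Matrix.submatrix_mul_equiv]

lemma submatrix_isTwoLevelOn (e : Fin d ≃ Fin d) {A : Matrix (Fin d) (Fin d) ℂ} {p q : Fin d}
    (h : IsTwoLevelOn A p q) :
    IsTwoLevelOn (A.submatrix ⇑e.symm ⇑e.symm) (e p) (e q) := by
  intro i j hij
  rw [Matrix.submatrix_apply]
  have haux : ∀ w : Fin d, ∀ u : Fin d, i ≠ e u → True := fun _ _ _ => trivial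
  have himp : ∀ (w u : Fin d), w ≠ e u → e.symm w ≠ u := by
    intro w u hw hc
    exact hw (by rw [← hc, Equiv.apply_symm_apply])
  have h2 := h (e.symm i) (e.symm j) ?_
  · rw [h2]
    simp only [EmbeddingLike.apply_eq_iff_eq]
  · rcases hij with ⟨h1', h2'⟩ | ⟨h1', h2'⟩
    · exact Or.inl ⟨himp i p h1', himp i q h2'⟩
    · exact Or.inr ⟨himp j p h1', himp j q h2'⟩

end TLaux

open TLaux

/-- Every `d × d` unitary matrix is a product of `m = d(d-1)/2` `P`-unitary matrices
with any prescribed determinants of modulus 1 whose product is `det U`. -/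
theorem unitary_eq_prod_P_unitary_prescribed_det (d : ℕ) (hd : 1 ≤ d)
    (σ : Equiv.Perm (Fin d))
    (U : Matrix (Fin d) (Fin d) ℂ) (hU : U ∈ Matrix.unitaryGroup (Fin d) ℂ)
    (μ : Fin (d * (d - 1) / 2) → ℂ) (hμ : ∀ i, ‖μ i‖ = 1)
    (hprod : ∏ i, μ i = U.det) :
    ∃ A : Fin (d * (d - 1) / 2) → Matrix (Fin d) (Fin d) ℂ,
      U = (List.ofFn A).prod ∧
      ∀ i, A i ∈ Matrix.unitaryGroup (Fin d) ℂ ∧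
        (∃ (k : ℕ) (hk : k + 1 < d),
          IsTwoLevelOn (A i) (σ ⟨k, by omega⟩) (σ ⟨k + 1, hk⟩)) ∧
        (A i).det = μ i := by
  have hWu : U.submatrix ⇑σ ⇑σ ∈ Matrix.unitaryGroup (Fin d) ℂ := submatrix_unitary σ hU
  obtain ⟨L, hlenL, hWprod, hTL⟩ := key d (U.submatrix ⇑σ ⇑σ) hWu (List.ofFn μ)
    (by simp) (by
      intro z hz
      rw [List.mem_ofFn] at hz
      obtain ⟨i, rfl⟩ := hz
      exact hμ i)
    (by rw [List.prod_ofFn, hprod, Matrix.det_submatrix_equiv_self])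
  set L' : List (Matrix (Fin d) (Fin d) ℂ) :=
    L.map (fun B => B.submatrix ⇑σ.symm ⇑σ.symm) with hL'
  have hlenL' : L'.length = d * (d-1) / 2 := by
    simp [hL', hlenL]
  have hUL' : U = L'.prod := by
    rw [hL', submatrix_list_prod, ← hWprod, Matrix.submatrix_submatrix]
    have : ⇑σ ∘ ⇑σ.symm = id := funext fun x => σ.apply_symm_apply x
    rw [this, Matrix.submatrix_id_id]
  have hofn : (List.ofFn fun i : Fin (d * (d-1) / 2) => L'[i.val]'(by rw [hlenL']; exact i.isLt))
      = L' := by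
    apply List.ext_getElem
    · simp [hlenL']
    · intro i h1 h2
      rw [List.getElem_ofFn]
  refine ⟨fun i => L'[i.val]'(by rw [hlenL']; exact i.isLt), ?_, ?_⟩
  · rw [hofn]
    exact hUL'
  · intro i
    dsimp only
    have hiL : i.val < L.length := by rw [hlenL]; simp
    have hgm : L'[i.val]'(by rw [hlenL']; exact i.isLt) =
        (L[i.val]'hiL).submatrix ⇑σ.symm ⇑σ.symm := by
      simp [hL']
    obtain ⟨hu, ⟨k, hk, htl⟩, hdet⟩ := hTL i.val hiL (by simp)
    rw [hgm]
    refine ⟨submatrix_unitary σ.symm hu, ⟨k, hk, ?_⟩, ?_⟩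
    · exact submatrix_isTwoLevelOn σ htl
    · rw [Matrix.det_submatrix_equiv_self, hdet, List.getElem_ofFn]
end

section
/- Let d ≥ 1, let σ be a permutation of {1,…,d}, and let U be a d×d complex special unitary matrix (unitary with det(U) = 1). Then U can be written as a product of at most d(d−1)/2 P-unitary matrices each having determinant 1; that is, there exist m ≤ d(d−1)/2 unitary matrices A_1,…,A_m with U = A_1 ⋯ A_m such that each A_i has det(A_i) = 1 and agrees with the identity matrix in every entry outside the 2×2 principal submatrix with row and column indices σ(k_i) and σ(k_i + 1) for some k_i ∈ {1,…,d−1}. -/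
set_option maxRecDepth 2000

open Matrix Complex

namespace SUP

variable {n : ℕ}

def tlEquiv (p q : Fin n) (hpq : p ≠ q) : (Fin 2 ⊕ {i : Fin n // i ≠ p ∧ i ≠ q}) ≃ Fin n where
  toFun := Sum.elim (fun t => if t = 0 then p else q) Subtype.val
  invFun i := if h : i = p then Sum.inl 0 else if h' : i = q then Sum.inl 1 else Sum.inr ⟨i, h, h'⟩
  left_inv := by
    rintro (t | ⟨i, h1, h2⟩)
    · fin_cases t <;> simp [hpq, Ne.symm hpq]
    · simp [h1, h2]
  right_inv := by
    intro i
    by_cases h : i = p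
    · simp [h]
    · by_cases h' : i = q <;> simp [h, h', Ne.symm hpq]

lemma tlEquiv_symm_p (p q : Fin n) (hpq : p ≠ q) : (tlEquiv p q hpq).symm p = Sum.inl 0 := by
  rw [Equiv.symm_apply_eq]; simp [tlEquiv]

lemma tlEquiv_symm_q (p q : Fin n) (hpq : p ≠ q) : (tlEquiv p q hpq).symm q = Sum.inl 1 := by
  rw [Equiv.symm_apply_eq]; simp [tlEquiv]

lemma tlEquiv_symm_other (p q : Fin n) (hpq : p ≠ q) {i : Fin n} (h1 : i ≠ p) (h2 : i ≠ q) :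
    (tlEquiv p q hpq).symm i = Sum.inr ⟨i, h1, h2⟩ := by
  rw [Equiv.symm_apply_eq]; simp [tlEquiv]

def mkTL (p q : Fin n) (hpq : p ≠ q) (M : Matrix (Fin 2) (Fin 2) ℂ) : Matrix (Fin n) (Fin n) ℂ :=
  (Matrix.fromBlocks M 0 0 (1 : Matrix {i : Fin n // i ≠ p ∧ i ≠ q} {i : Fin n // i ≠ p ∧ i ≠ q} ℂ)).submatrix
    ⇑(tlEquiv p q hpq).symm ⇑(tlEquiv p q hpq).symm

lemma mkTL_pp (p q : Fin n) (hpq : p ≠ q) (M : Matrix (Fin 2) (Fin 2) ℂ) :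
    mkTL p q hpq M p p = M 0 0 := by
  simp [mkTL, tlEquiv_symm_p]

lemma mkTL_pq (p q : Fin n) (hpq : p ≠ q) (M : Matrix (Fin 2) (Fin 2) ℂ) :
    mkTL p q hpq M p q = M 0 1 := by
  simp [mkTL, tlEquiv_symm_p, tlEquiv_symm_q]

lemma mkTL_qp (p q : Fin n) (hpq : p ≠ q) (M : Matrix (Fin 2) (Fin 2) ℂ) :
    mkTL p q hpq M q p = M 1 0 := by
  simp [mkTL, tlEquiv_symm_p, tlEquiv_symm_q]

lemma mkTL_qq (p q : Fin n) (hpq : p ≠ q) (M : Matrix (Fin 2) (Fin 2) ℂ) :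
    mkTL p q hpq M q q = M 1 1 := by
  simp [mkTL, tlEquiv_symm_q]

lemma mkTL_twoLevel (p q : Fin n) (hpq : p ≠ q) (M : Matrix (Fin 2) (Fin 2) ℂ) :
    ∀ i j, (i ≠ p ∧ i ≠ q) ∨ (j ≠ p ∧ j ≠ q) → mkTL p q hpq M i j = if i = j then 1 else 0 := by
  rintro i j (⟨h1, h2⟩ | ⟨h1, h2⟩)
  · rw [mkTL, submatrix_apply, tlEquiv_symm_other p q hpq h1 h2]
    by_cases hj : j = p
    · rw [hj, tlEquiv_symm_p]
      simp [fromBlocks, h1]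
    · by_cases hj' : j = q
      · rw [hj', tlEquiv_symm_q]
        simp [fromBlocks, h2]
      · rw [tlEquiv_symm_other p q hpq hj hj']
        simp [fromBlocks, one_apply, Subtype.ext_iff]
  · rw [mkTL, submatrix_apply, tlEquiv_symm_other p q hpq h1 h2]
    by_cases hi : i = p
    · rw [hi, tlEquiv_symm_p]
      simp [fromBlocks, Ne.symm h1]
    · by_cases hi' : i = q
      · rw [hi', tlEquiv_symm_q]
        simp [fromBlocks, Ne.symm h2]
      · rw [tlEquiv_symm_other p q hpq hi hi']
        simp [fromBlocks, one_apply, Subtype.ext_iff]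

lemma mkTL_det (p q : Fin n) (hpq : p ≠ q) (M : Matrix (Fin 2) (Fin 2) ℂ) :
    (mkTL p q hpq M).det = M.det := by
  rw [mkTL, det_submatrix_equiv_self, det_fromBlocks_zero₂₁, det_one, mul_one]

lemma mkTL_unitary (p q : Fin n) (hpq : p ≠ q) (M : Matrix (Fin 2) (Fin 2) ℂ)
    (hM : Mᴴ * M = 1) : mkTL p q hpq M ∈ Matrix.unitaryGroup (Fin n) ℂ := by
  rw [Matrix.mem_unitaryGroup_iff', Matrix.star_eq_conjTranspose, mkTL, conjTranspose_submatrix,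
    submatrix_mul_equiv, fromBlocks_conjTranspose, fromBlocks_multiply]
  simp [hM, fromBlocks_one]

/-- multiplication by a two-level matrix -/
lemma twoLevel_mul_row_other {G U : Matrix (Fin n) (Fin n) ℂ} {p q : Fin n}
    (hG : ∀ i j, (i ≠ p ∧ i ≠ q) ∨ (j ≠ p ∧ j ≠ q) → G i j = if i = j then 1 else 0)
    (j : Fin n) {i : Fin n} (h1 : i ≠ p) (h2 : i ≠ q) : (G * U) i j = U i j := by
  rw [mul_apply]
  have : ∀ k, G i k * U k j = if i = k then U k j else 0 := by
    intro k
    rw [hG i k (Or.inl ⟨h1, h2⟩)]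
    by_cases h : i = k <;> simp [h]
  simp_rw [this]
  simp

lemma twoLevel_mul_row_mem {G U : Matrix (Fin n) (Fin n) ℂ} {p q : Fin n} (hpq : p ≠ q)
    (hG : ∀ i j, (i ≠ p ∧ i ≠ q) ∨ (j ≠ p ∧ j ≠ q) → G i j = if i = j then 1 else 0)
    (j r : Fin n) (hr : r = p ∨ r = q) :
    (G * U) r j = G r p * U p j + G r q * U q j := by
  rw [mul_apply]
  have key : ∀ k : Fin n, G r k * U k j =
      (if k = p then G r p * U p j else 0) + (if k = q then G r q * U q j else 0) := by
    intro k
    by_cases h : k = p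
    · subst h; simp [hpq]
    · by_cases h' : k = q
      · subst h'; simp [h]
      · have hrk : r ≠ k := by
          rcases hr with hr | hr <;> subst hr
          · exact Ne.symm h
          · exact Ne.symm h'
        have hz : G r k = 0 := by
          rw [hG r k (Or.inr ⟨h, h'⟩), if_neg hrk]
        rw [hz, zero_mul, if_neg h, if_neg h', add_zero]
  rw [Finset.sum_congr rfl (fun k _ => key k), Finset.sum_add_distrib,
    Finset.sum_ite_eq', Finset.sum_ite_eq']
  simp


lemma su2_unitary (a b : ℂ) (r : ℝ) (hrne : (r:ℂ) ≠ 0)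
    (hkey : (starRingEnd ℂ) a * a + (starRingEnd ℂ) b * b = (r:ℂ) * r) :
    (!![(starRingEnd ℂ) a / r, (starRingEnd ℂ) b / r; -b / r, a / r])ᴴ *
      !![(starRingEnd ℂ) a / r, (starRingEnd ℂ) b / r; -b / r, a / r] = 1 := by
  ext i j
  fin_cases i <;> fin_cases j <;>
    simp only [conjTranspose_apply, mul_apply, Fin.sum_univ_succ, Finset.univ_eq_empty,
      Finset.sum_empty, add_zero, Matrix.cons_val', Matrix.cons_val_zero, Matrix.cons_val_one,
      Matrix.head_cons, Matrix.head_fin_const, Matrix.empty_val', Matrix.cons_val_fin_one,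
      one_apply, map_div₀, map_neg, Complex.conj_conj, Complex.conj_ofReal] <;>
    norm_num <;>
    field_simp <;>
    first
    | ring1
    | linear_combination hkey

lemma su2_det (a b : ℂ) (r : ℝ) (hrne : (r:ℂ) ≠ 0)
    (hkey : (starRingEnd ℂ) a * a + (starRingEnd ℂ) b * b = (r:ℂ) * r) :
    (!![(starRingEnd ℂ) a / r, (starRingEnd ℂ) b / r; -b / r, a / r]).det = 1 := by
  rw [Matrix.det_fin_two_of]
  field_simp
  linear_combination hkey

lemma givens_exists (p q : Fin n) (hpq : p ≠ q) (U : Matrix (Fin n) (Fin n) ℂ) (j₀ : Fin n) :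
    ∃ G : Matrix (Fin n) (Fin n) ℂ,
      G ∈ Matrix.unitaryGroup (Fin n) ℂ ∧ G.det = 1 ∧
      (∀ i j, (i ≠ p ∧ i ≠ q) ∨ (j ≠ p ∧ j ≠ q) → G i j = if i = j then 1 else 0) ∧
      (G * U) q j₀ = 0 ∧ ((G * U) p j₀).im = 0 ∧ 0 ≤ ((G * U) p j₀).re ∧
      (∀ i, i ≠ p → i ≠ q → (G * U) i j₀ = U i j₀) := by
  set a := U p j₀ with ha
  set b := U q j₀ with hb
  by_cases hs : Complex.normSq a + Complex.normSq b = 0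
  · have ha0 : a = 0 := by
      have h1 := Complex.normSq_nonneg a
      have h2 := Complex.normSq_nonneg b
      have h3 : Complex.normSq a = 0 := by linarith
      exact Complex.normSq_eq_zero.mp h3
    have hb0 : b = 0 := by
      have h1 := Complex.normSq_nonneg a
      have h2 := Complex.normSq_nonneg b
      have h3 : Complex.normSq b = 0 := by linarith
      exact Complex.normSq_eq_zero.mp h3
    refine ⟨1, one_mem _, det_one, fun i j _ => one_apply, ?_⟩
    rw [one_mul]
    exact ⟨hb0, by rw [← ha, ha0]; simp, by rw [← ha, ha0]; simp, fun _ _ _ => rfl⟩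
  · set s : ℝ := Complex.normSq a + Complex.normSq b with hsdef
    have hs0 : 0 < s := lt_of_le_of_ne (add_nonneg (Complex.normSq_nonneg a) (Complex.normSq_nonneg b)) (Ne.symm hs)
    set r : ℝ := Real.sqrt s with hrdef
    have hr0 : 0 < r := Real.sqrt_pos.mpr hs0
    have hrne : (r : ℂ) ≠ 0 := by exact_mod_cast ne_of_gt hr0
    have hrr : (r : ℂ) * (r : ℂ) = (s : ℂ) := by
      rw [← Complex.ofReal_mul, Real.mul_self_sqrt hs0.le]
    have hkey : (starRingEnd ℂ) a * a + (starRingEnd ℂ) b * b = (r:ℂ) * r := by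
      rw [hrr, hsdef]
      push_cast
      rw [← Complex.normSq_eq_conj_mul_self, ← Complex.normSq_eq_conj_mul_self]
    set M : Matrix (Fin 2) (Fin 2) ℂ :=
      !![(starRingEnd ℂ) a / r, (starRingEnd ℂ) b / r; -b / r, a / r] with hM
    have e00 : M 0 0 = (starRingEnd ℂ) a / r := by rw [hM]; simp
    have e01 : M 0 1 = (starRingEnd ℂ) b / r := by rw [hM]; simp
    have e10 : M 1 0 = -b / r := by rw [hM]; simp
    have e11 : M 1 1 = a / r := by rw [hM]; simp
    have hTL := mkTL_twoLevel p q hpq M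
    have hvq : (mkTL p q hpq M * U) q j₀ = 0 := by
      rw [twoLevel_mul_row_mem hpq hTL j₀ q (Or.inr rfl), mkTL_qp, mkTL_qq, e10, e11]
      field_simp
      ring
    have hvp : (mkTL p q hpq M * U) p j₀ = (r : ℂ) := by
      rw [twoLevel_mul_row_mem hpq hTL j₀ p (Or.inl rfl), mkTL_pp, mkTL_pq, e00, e01]
      field_simp
      linear_combination hkey
    refine ⟨mkTL p q hpq M, mkTL_unitary p q hpq M (by rw [hM]; exact su2_unitary a b r hrne hkey),
      by rw [mkTL_det, hM]; exact su2_det a b r hrne hkey, hTL, hvq, ?_, ?_, ?_⟩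
    · rw [hvp]; simp
    · rw [hvp]; simpa using hr0.le
    · intro i h1 h2
      exact twoLevel_mul_row_other hTL j₀ h1 h2


def Good (m : ℕ) (B : Matrix (Fin m) (Fin m) ℂ) : Prop :=
  B ∈ Matrix.unitaryGroup (Fin m) ℂ ∧ B.det = 1 ∧
    ∃ (k : ℕ) (hk : k + 1 < m),
      ∀ i j, (i ≠ ⟨k, Nat.lt_of_succ_lt hk⟩ ∧ i ≠ ⟨k + 1, hk⟩) ∨
        (j ≠ ⟨k, Nat.lt_of_succ_lt hk⟩ ∧ j ≠ ⟨k + 1, hk⟩) → B i j = if i = j then 1 else 0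

lemma clearLem (d : ℕ) : ∀ (t : ℕ), t ≤ d → ∀ U : Matrix (Fin (d+1)) (Fin (d+1)) ℂ,
    (∀ i : Fin (d+1), t < (i : ℕ) → U i 0 = 0) →
    ∃ L : List (Matrix (Fin (d+1)) (Fin (d+1)) ℂ),
      L.length ≤ t ∧ (∀ B ∈ L, Good (d+1) B) ∧
      (∀ i : Fin (d+1), 0 < (i : ℕ) → (L.prod * U) i 0 = 0) ∧
      (t = 0 → L.prod * U = U) ∧
      (0 < t → ((L.prod * U) 0 0).im = 0 ∧ 0 ≤ ((L.prod * U) 0 0).re) := by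
  intro t
  induction t with
  | zero =>
    intro _ U h0
    exact ⟨[], by simp, by simp, by simpa using h0, fun _ => by simp, fun h => absurd h (by simp)⟩
  | succ t IH =>
    intro ht U h0
    set p : Fin (d+1) := ⟨t, by omega⟩ with hp
    set q : Fin (d+1) := ⟨t+1, by omega⟩ with hq
    have hpq : p ≠ q := by simp [hp, hq, Fin.ext_iff]
    obtain ⟨G, hGU, hGdet, hGTL, hq0, him, hre, hother⟩ := givens_exists p q hpq U 0
    have h0' : ∀ i : Fin (d+1), t < (i : ℕ) → (G * U) i 0 = 0 := by
      intro i hi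
      by_cases hiq : i = q
      · rw [hiq]; exact hq0
      · have hip : i ≠ p := by
          intro hc
          rw [hc, hp] at hi
          simp at hi
        rw [hother i hip hiq]
        apply h0
        have : (i : ℕ) ≠ t + 1 := by
          intro hc
          exact hiq (Fin.ext (by rw [hc, hq]))
        omega
    obtain ⟨L', hlen', hgood', hzero', hemp', hreal'⟩ := IH (by omega) (G * U) h0'
    refine ⟨L' ++ [G], ?_, ?_, ?_, ?_, ?_⟩
    · simp; omega
    · intro B hB
      rcases List.mem_append.mp hB with h | h
      · exact hgood' B h
      · rw [List.mem_singleton.mp h]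
        exact ⟨hGU, hGdet, t, by omega, hGTL⟩
    · intro i hi
      rw [List.prod_append, List.prod_singleton, mul_assoc]
      exact hzero' i hi
    · intro h; exact absurd h (by simp)
    · intro _
      rw [List.prod_append, List.prod_singleton, mul_assoc]
      by_cases ht0 : t = 0
      · rw [hemp' ht0]
        subst ht0
        have hp0 : p = 0 := by simp [hp, Fin.ext_iff]
        rw [← hp0]
        exact ⟨him, hre⟩
      · exact hreal' (by omega)


def emb {m : ℕ} (B : Matrix (Fin m) (Fin m) ℂ) : Matrix (Fin (m+1)) (Fin (m+1)) ℂ :=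
  Matrix.of fun i j =>
    Fin.cases (Fin.cases (1 : ℂ) (fun _ => 0) j) (fun i' => Fin.cases 0 (fun j' => B i' j') j) i

variable {m : ℕ}

@[simp] lemma emb_zero_zero (B : Matrix (Fin m) (Fin m) ℂ) : emb B 0 0 = 1 := rfl

@[simp] lemma emb_zero_succ (B : Matrix (Fin m) (Fin m) ℂ) (j : Fin m) :
    emb B 0 j.succ = 0 := by simp [emb]

@[simp] lemma emb_succ_zero (B : Matrix (Fin m) (Fin m) ℂ) (i : Fin m) :
    emb B i.succ 0 = 0 := by simp [emb]

@[simp] lemma emb_succ_succ (B : Matrix (Fin m) (Fin m) ℂ) (i j : Fin m) :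
    emb B i.succ j.succ = B i j := by simp [emb]

lemma emb_one : emb (1 : Matrix (Fin m) (Fin m) ℂ) = 1 := by
  ext i j
  induction i using Fin.cases with
  | zero =>
    induction j using Fin.cases with
    | zero => simp
    | succ j => simp [one_apply, (Fin.succ_ne_zero j).symm]
  | succ i =>
    induction j using Fin.cases with
    | zero => simp [one_apply, Fin.succ_ne_zero i]
    | succ j => simp [one_apply, Fin.succ_inj]

lemma emb_mul (B C : Matrix (Fin m) (Fin m) ℂ) : emb (B * C) = emb B * emb C := by
  ext i j
  induction i using Fin.cases with
  | zero =>
    induction j using Fin.cases with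
    | zero => simp [mul_apply, Fin.sum_univ_succ]
    | succ j => simp [mul_apply, Fin.sum_univ_succ]
  | succ i =>
    induction j using Fin.cases with
    | zero => simp [mul_apply, Fin.sum_univ_succ]
    | succ j => simp [mul_apply, Fin.sum_univ_succ]

lemma emb_conjTranspose (B : Matrix (Fin m) (Fin m) ℂ) : (emb B)ᴴ = emb Bᴴ := by
  ext i j
  induction i using Fin.cases with
  | zero =>
    induction j using Fin.cases with
    | zero => simp
    | succ j => simp
  | succ i =>
    induction j using Fin.cases with
    | zero => simp
    | succ j => simp

lemma emb_inj {B C : Matrix (Fin m) (Fin m) ℂ} (h : emb B = emb C) : B = C := by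
  ext i j
  have := congrFun (congrFun h i.succ) j.succ
  simpa using this

lemma emb_unitary {B : Matrix (Fin m) (Fin m) ℂ}
    (hB : B ∈ Matrix.unitaryGroup (Fin m) ℂ) :
    emb B ∈ Matrix.unitaryGroup (Fin (m+1)) ℂ := by
  rw [Matrix.mem_unitaryGroup_iff', Matrix.star_eq_conjTranspose, emb_conjTranspose, ← emb_mul]
  have : Bᴴ * B = 1 := by
    rw [← Matrix.star_eq_conjTranspose]
    exact Matrix.mem_unitaryGroup_iff'.mp hB
  rw [this, emb_one]

lemma emb_unitary_rev {B : Matrix (Fin m) (Fin m) ℂ}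
    (hB : emb B ∈ Matrix.unitaryGroup (Fin (m+1)) ℂ) :
    B ∈ Matrix.unitaryGroup (Fin m) ℂ := by
  rw [Matrix.mem_unitaryGroup_iff', Matrix.star_eq_conjTranspose]
  apply emb_inj
  rw [emb_mul, ← emb_conjTranspose, emb_one, ← Matrix.star_eq_conjTranspose]
  exact Matrix.mem_unitaryGroup_iff'.mp hB

lemma emb_det (B : Matrix (Fin m) (Fin m) ℂ) : (emb B).det = B.det := by
  rw [Matrix.det_succ_column_zero, Fin.sum_univ_succ]
  have h1 : ∀ i : Fin m, (-1 : ℂ) ^ ((i.succ : Fin (m+1)) : ℕ) * emb B i.succ 0 *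
      ((emb B).submatrix i.succ.succAbove Fin.succ).det = 0 := by
    intro i; simp
  rw [Finset.sum_congr rfl (fun i _ => h1 i)]
  have h2 : (emb B).submatrix Fin.succ Fin.succ = B := by
    ext i j
    simp
  simp [Fin.succAbove_zero, h2]

lemma emb_good {B : Matrix (Fin m) (Fin m) ℂ} (hB : Good m B) : Good (m+1) (emb B) := by
  obtain ⟨hU, hdet, k, hk, hTL⟩ := hB
  refine ⟨emb_unitary hU, by rw [emb_det]; exact hdet, k + 1, by omega, ?_⟩
  intro i j hij
  have hsp : (⟨k + 1, by omega⟩ : Fin (m+1)) = Fin.succ ⟨k, Nat.lt_of_succ_lt hk⟩ := rfl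
  have hsq : (⟨k + 2, by omega⟩ : Fin (m+1)) = Fin.succ ⟨k + 1, hk⟩ := rfl
  induction i using Fin.cases with
  | zero =>
    induction j using Fin.cases with
    | zero => simp
    | succ j => simp [(Fin.succ_ne_zero j).symm]
  | succ i =>
    induction j using Fin.cases with
    | zero => simp [Fin.succ_ne_zero i]
    | succ j =>
      rw [emb_succ_succ]
      have hcond : (i ≠ ⟨k, Nat.lt_of_succ_lt hk⟩ ∧ i ≠ ⟨k + 1, hk⟩) ∨
          (j ≠ ⟨k, Nat.lt_of_succ_lt hk⟩ ∧ j ≠ ⟨k + 1, hk⟩) := by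
        rcases hij with ⟨h1, h2⟩ | ⟨h1, h2⟩
        · rw [hsp] at h1; rw [hsq] at h2
          exact Or.inl ⟨fun hc => h1 (by rw [hc]), fun hc => h2 (by rw [hc])⟩
        · rw [hsp] at h1; rw [hsq] at h2
          exact Or.inr ⟨fun hc => h1 (by rw [hc]), fun hc => h2 (by rw [hc])⟩
      rw [hTL i j hcond]
      simp [Fin.succ_inj]

lemma emb_list_prod (L : List (Matrix (Fin m) (Fin m) ℂ)) :
    (L.map emb).prod = emb L.prod := by
  induction L with
  | nil => simp [emb_one]
  | cons a L IH => simp [emb_mul, IH]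


lemma list_prod_unitary {m : ℕ} (L : List (Matrix (Fin m) (Fin m) ℂ))
    (h : ∀ B ∈ L, B ∈ Matrix.unitaryGroup (Fin m) ℂ) :
    L.prod ∈ Matrix.unitaryGroup (Fin m) ℂ := by
  induction L with
  | nil => simpa using one_mem _
  | cons a L IH =>
    rw [List.prod_cons]
    exact mul_mem (h a List.mem_cons_self) (IH fun B hB => h B (List.mem_cons_of_mem a hB))

lemma list_prod_det_one {m : ℕ} (L : List (Matrix (Fin m) (Fin m) ℂ))
    (h : ∀ B ∈ L, B.det = 1) : L.prod.det = 1 := by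
  induction L with
  | nil => simp
  | cons a L IH =>
    rw [List.prod_cons, det_mul, h a List.mem_cons_self,
      IH fun B hB => h B (List.mem_cons_of_mem a hB), one_mul]

lemma star_list_prod {m : ℕ} (L : List (Matrix (Fin m) (Fin m) ℂ)) :
    star L.prod = ((L.map star).reverse).prod := by
  induction L with
  | nil => simp
  | cons a L IH =>
    rw [List.prod_cons, StarMul.star_mul, IH, List.map_cons, List.reverse_cons, List.prod_append,
      List.prod_singleton]

lemma star_good {m : ℕ} {B : Matrix (Fin m) (Fin m) ℂ} (hB : Good m B) : Good m (star B) := by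
  obtain ⟨hU, hdet, k, hk, hTL⟩ := hB
  refine ⟨Unitary.star_mem hU, ?_, k, hk, ?_⟩
  · rw [Matrix.star_eq_conjTranspose, Matrix.det_conjTranspose, hdet, star_one]
  · intro i j hij
    rw [Matrix.star_eq_conjTranspose, conjTranspose_apply, hTL j i (Or.symm hij)]
    by_cases h : i = j
    · simp [h]
    · rw [if_neg (fun hc : j = i => h hc.symm), if_neg h, star_zero]

theorem core : ∀ (m : ℕ) (U : Matrix (Fin m) (Fin m) ℂ),
    U ∈ Matrix.unitaryGroup (Fin m) ℂ → U.det = 1 →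
    ∃ L : List (Matrix (Fin m) (Fin m) ℂ),
      L.length ≤ m * (m - 1) / 2 ∧ U = L.prod ∧ ∀ B ∈ L, Good m B := by
  intro m
  induction m with
  | zero =>
    intro U _ _
    exact ⟨[], by simp, Subsingleton.elim _ _, by simp⟩
  | succ d IH =>
    intro U hU hdet
    rcases Nat.eq_zero_or_pos d with hd0 | hdpos
    · subst hd0
      refine ⟨[], by simp, ?_, by simp⟩
      rw [List.prod_nil]
      ext i j
      fin_cases i; fin_cases j
      rw [Matrix.det_fin_one] at hdet
      simpa using hdet
    · obtain ⟨L₁, hlen₁, hgood₁, hzero, -, hreal⟩ :=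
        clearLem d d le_rfl U (fun i hi => absurd i.isLt (by omega))
      set V := L₁.prod * U with hV
      have hP1 : L₁.prod ∈ Matrix.unitaryGroup (Fin (d+1)) ℂ :=
        list_prod_unitary L₁ (fun B hB => (hgood₁ B hB).1)
      have hVU : V ∈ Matrix.unitaryGroup (Fin (d+1)) ℂ := mul_mem hP1 hU
      have hVdet : V.det = 1 := by
        rw [hV, det_mul, list_prod_det_one L₁ (fun B hB => (hgood₁ B hB).2.1), hdet, one_mul]
      -- V 0 0 = 1
      have hcol : (Vᴴ * V) 0 0 = 1 := by
        rw [← Matrix.star_eq_conjTranspose, Matrix.mem_unitaryGroup_iff'.mp hVU]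
        simp
      have hsum : ∑ k : Fin (d+1), (starRingEnd ℂ) (V k 0) * V k 0 = 1 := by
        rw [← hcol, mul_apply]
        congr 1
      have hsingle : (starRingEnd ℂ) (V 0 0) * V 0 0 = 1 := by
        rw [← hsum]
        symm
        apply Finset.sum_eq_single_of_mem 0 (Finset.mem_univ _)
        intro k _ hk
        rw [hzero k (Nat.pos_of_ne_zero (fun h => hk (Fin.ext h)))]
        simp
      have hns : Complex.normSq (V 0 0) = 1 := by
        have := hsingle
        rw [← Complex.normSq_eq_conj_mul_self] at this
        exact_mod_cast this
      have hV00 : V 0 0 = 1 := by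
        obtain ⟨him, hre⟩ := hreal hdpos
        have hre2 : (V 0 0).re ^ 2 = 1 := by
          rw [Complex.normSq_apply, him] at hns
          nlinarith
        have : (V 0 0).re = 1 := by nlinarith
        exact Complex.ext (by rw [this]; rfl) (by rw [him]; rfl)
      -- row zeros
      have hrowsum : ∑ j : Fin (d+1), Complex.normSq (V 0 j) = 1 := by
        have h1 : (V * Vᴴ) 0 0 = 1 := by
          rw [← Matrix.star_eq_conjTranspose, Matrix.mem_unitaryGroup_iff.mp hVU]
          simp
        have h2 : ∑ j : Fin (d+1), V 0 j * (starRingEnd ℂ) (V 0 j) = 1 := by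
          rw [← h1, mul_apply]
          congr 1
        have h3 : ((∑ j : Fin (d+1), Complex.normSq (V 0 j) : ℝ) : ℂ) = 1 := by
          push_cast
          rw [← h2]
          congr 1
          ext j
          rw [Complex.mul_conj]
        exact_mod_cast h3
      have hrow : ∀ j : Fin d, V 0 j.succ = 0 := by
        intro j
        rw [Fin.sum_univ_succ, hV00] at hrowsum
        have hz : ∑ j : Fin d, Complex.normSq (V 0 j.succ) = 0 := by
          simp at hrowsum
          linarith [hrowsum]
        have := (Finset.sum_eq_zero_iff_of_nonneg
          (fun j _ => Complex.normSq_nonneg (V 0 j.succ))).mp hz j (Finset.mem_univ j)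
        exact Complex.normSq_eq_zero.mp this
      -- W
      set W : Matrix (Fin d) (Fin d) ℂ := Matrix.of (fun i j => V i.succ j.succ) with hW
      have hVemb : V = emb W := by
        ext i j
        induction i using Fin.cases with
        | zero =>
          induction j using Fin.cases with
          | zero => rw [emb_zero_zero, hV00]
          | succ j => rw [emb_zero_succ]; exact hrow j
        | succ i =>
          induction j using Fin.cases with
          | zero => rw [emb_succ_zero]; exact hzero i.succ (by simp)
          | succ j => rw [emb_succ_succ]; rfl
      have hWU : W ∈ Matrix.unitaryGroup (Fin d) ℂ := emb_unitary_rev (hVemb ▸ hVU)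
      have hWdet : W.det = 1 := by
        have := emb_det W
        rw [← hVemb, hVdet] at this
        exact this.symm
      obtain ⟨L₂, hlen₂, hWprod, hgood₂⟩ := IH W hWU hWdet
      refine ⟨(L₁.map star).reverse ++ L₂.map emb, ?_, ?_, ?_⟩
      · have e1 : ((L₁.map star).reverse ++ L₂.map emb).length = L₁.length + L₂.length := by
          simp
        have e3 : d * (d - 1) / 2 + d ≤ (d + 1) * ((d + 1) - 1) / 2 := by
          rw [Nat.add_sub_cancel]
          rcases d with _ | e
          · simp
          · rw [Nat.add_sub_cancel,
              show (e + 1 + 1) * (e + 1) = (e + 1) * e + 2 * (e + 1) by ring,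
              Nat.add_mul_div_left _ _ (by norm_num : (0:ℕ) < 2)]
        rw [e1]
        omega
      · rw [List.prod_append, ← star_list_prod, emb_list_prod, ← hWprod, ← hVemb, hV,
          ← mul_assoc]
        rw [show star L₁.prod * L₁.prod = 1 from Matrix.mem_unitaryGroup_iff'.mp hP1, one_mul]
      · intro B hB
        rcases List.mem_append.mp hB with h | h
        · rw [List.mem_reverse] at h
          obtain ⟨B', hB', rfl⟩ := List.mem_map.mp h
          exact star_good (hgood₁ B' hB')
        · obtain ⟨B', hB', rfl⟩ := List.mem_map.mp h
          exact emb_good (hgood₂ B' hB')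


lemma submatrix_list_prod {d : ℕ} (e : Fin d ≃ Fin d) (L : List (Matrix (Fin d) (Fin d) ℂ)) :
    L.prod.submatrix ⇑e ⇑e = (L.map (fun B => B.submatrix ⇑e ⇑e)).prod := by
  induction L with
  | nil => simp [Matrix.submatrix_one_equiv]
  | cons a L IH =>
    rw [List.prod_cons, List.map_cons, List.prod_cons, ← IH,
      Matrix.submatrix_mul_equiv a L.prod ⇑e e ⇑e]

end SUP

/-- Every `d × d` special unitary matrix is a product of at most `d(d-1)/2`
`P`-unitary matrices each having determinant 1. -/
theorem special_unitary_eq_prod_P_unitary_det_one (d : ℕ) (hd : 1 ≤ d)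
    (σ : Equiv.Perm (Fin d))
    (U : Matrix (Fin d) (Fin d) ℂ) (hU : U ∈ Matrix.unitaryGroup (Fin d) ℂ)
    (hdet : U.det = 1) :
    ∃ (m : ℕ) (_ : m ≤ d * (d - 1) / 2) (A : Fin m → Matrix (Fin d) (Fin d) ℂ),
      U = (List.ofFn A).prod ∧
      ∀ i, A i ∈ Matrix.unitaryGroup (Fin d) ℂ ∧
        (A i).det = 1 ∧
        ∃ (k : ℕ) (hk : k + 1 < d),
          IsTwoLevelOn (A i) (σ ⟨k, by omega⟩) (σ ⟨k + 1, hk⟩) := by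
  classical
  set V := U.submatrix ⇑σ ⇑σ with hVdef
  have hVU : V ∈ Matrix.unitaryGroup (Fin d) ℂ := by
    rw [Matrix.mem_unitaryGroup_iff', Matrix.star_eq_conjTranspose, hVdef,
      Matrix.conjTranspose_submatrix, Matrix.submatrix_mul_equiv Uᴴ U ⇑σ σ ⇑σ]
    rw [show Uᴴ * U = 1 by
      rw [← Matrix.star_eq_conjTranspose]; exact Matrix.mem_unitaryGroup_iff'.mp hU]
    exact Matrix.submatrix_one_equiv σ
  have hVdet : V.det = 1 := by rw [hVdef, Matrix.det_submatrix_equiv_self, hdet]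
  obtain ⟨L, hlen, hprod, hgood⟩ := SUP.core d V hVU hVdet
  set f : Matrix (Fin d) (Fin d) ℂ → Matrix (Fin d) (Fin d) ℂ :=
    fun B => B.submatrix ⇑σ.symm ⇑σ.symm with hf
  have hUV : U = (L.map f).prod := by
    rw [hf, ← SUP.submatrix_list_prod σ.symm L, ← hprod]
    ext i j
    simp [hVdef]
  refine ⟨(L.map f).length, by simpa using hlen, (L.map f).get, ?_, ?_⟩
  · rw [List.ofFn_get]; exact hUV
  · intro i
    have hmem : (L.map f).get i ∈ L.map f := List.get_mem _ i
    obtain ⟨B, hB, hfB⟩ := List.mem_map.mp hmem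
    obtain ⟨hBU, hBdet, k, hk, hTL⟩ := hgood B hB
    refine ⟨?_, ?_, k, hk, ?_⟩
    · rw [← hfB, Matrix.mem_unitaryGroup_iff', Matrix.star_eq_conjTranspose, hf,
        Matrix.conjTranspose_submatrix, Matrix.submatrix_mul_equiv Bᴴ B ⇑σ.symm σ.symm ⇑σ.symm]
      rw [show Bᴴ * B = 1 by
        rw [← Matrix.star_eq_conjTranspose]; exact Matrix.mem_unitaryGroup_iff'.mp hBU]
      exact Matrix.submatrix_one_equiv σ.symm
    · rw [← hfB, hf]
      rw [Matrix.det_submatrix_equiv_self σ.symm B]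
      exact hBdet
    · intro i' j' hcond
      rw [← hfB]
      have hcond' : (σ.symm i' ≠ ⟨k, Nat.lt_of_succ_lt hk⟩ ∧ σ.symm i' ≠ ⟨k + 1, hk⟩) ∨
          (σ.symm j' ≠ ⟨k, Nat.lt_of_succ_lt hk⟩ ∧ σ.symm j' ≠ ⟨k + 1, hk⟩) := by
        rcases hcond with ⟨h1, h2⟩ | ⟨h1, h2⟩
        · exact Or.inl ⟨fun hc => h1 (by rw [← hc, Equiv.apply_symm_apply]),
            fun hc => h2 (by rw [← hc, Equiv.apply_symm_apply])⟩
        · exact Or.inr ⟨fun hc => h1 (by rw [← hc, Equiv.apply_symm_apply]),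
            fun hc => h2 (by rw [← hc, Equiv.apply_symm_apply])⟩
      show B.submatrix ⇑σ.symm ⇑σ.symm i' j' = _
      rw [Matrix.submatrix_apply, hTL _ _ hcond']
      by_cases h : i' = j'
      · simp [h]
      · rw [if_neg (fun hc => h (σ.symm.injective hc)), if_neg h]
end

section
/- Let n ≥ 1 and N = 2^n, and let G_n = (X_1,…,X_N) be a Gray code of length-n binary strings. Then every N×N complex unitary matrix U, with rows and columns indexed by length-n binary strings, can be written as a product of at most N(N−1)/2 G_n-unitary matrices, i.e., U = A_1 ⋯ A_m with m ≤ N(N−1)/2 where each A_i is a unitary matrix agreeing with the identity in every entry outside the 2×2 principal submatrix with row and column indices X_{k_i} and X_{k_i+1}, for some k_i ∈ {1,…,N−1}. In particular, each factor A_i differs from the identity only in rows and columns indexed by two binary strings that differ in exactly one position. -/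
/-- Two length-`n` binary strings differ in exactly one position. -/
def DiffersInOnePos {n : ℕ} (x y : Fin n → Bool) : Prop :=
  (Finset.univ.filter fun j => x j ≠ y j).card = 1

namespace Gray

open Matrix

variable {N : ℕ}

/-- The two-level matrix with 2×2 block `[[a,b],[c,d]]` at positions `p, q`. -/
def tl (p q : Fin N) (a b c d : ℂ) : Matrix (Fin N) (Fin N) ℂ :=
  Matrix.of fun i j =>
    if i = p then (if j = p then a else if j = q then b else 0)
    else if i = q then (if j = p then c else if j = q then d else 0)
    else if i = j then 1 else 0

lemma tl_isTwoLevelOn (p q : Fin N) (a b c d : ℂ) :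
    IsTwoLevelOn (tl p q a b c d) p q := by
  intro i j h
  rcases h with ⟨hip, hiq⟩ | ⟨hjp, hjq⟩ <;>
    simp only [tl, Matrix.of_apply] <;> split_ifs <;> simp_all

lemma sum_pair {p q : Fin N} (hpq : p ≠ q) (a b : ℂ) (g : Fin N → ℂ) :
    ∑ k, (if k = p then a else if k = q then b else 0) * g k = a * g p + b * g q := by
  have h : ∀ k, (if k = p then a else if k = q then b else 0) * g k
      = (if k = p then a * g p else 0) + (if k = q then b * g q else 0) := by
    intro k
    by_cases h1 : k = p
    · subst h1; simp [hpq]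
    · by_cases h2 : k = q <;> simp [h1, h2, Ne.symm hpq]
  simp [h, Finset.sum_add_distrib, Finset.sum_ite_eq']

lemma tl_mul {p q : Fin N} (hpq : p ≠ q) (a b c d : ℂ)
    (U : Matrix (Fin N) (Fin N) ℂ) :
    tl p q a b c d * U = Matrix.of fun i j =>
      if i = p then a * U p j + b * U q j
      else if i = q then c * U p j + d * U q j
      else U i j := by
  ext i j
  rw [Matrix.mul_apply]
  by_cases hip : i = p
  · subst hip
    simp only [tl, Matrix.of_apply, if_pos rfl]
    exact sum_pair hpq a b _
  · by_cases hiq : i = q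
    · subst hiq
      simp only [tl, Matrix.of_apply, if_neg hip, if_pos rfl]
      exact sum_pair hpq c d _
    · simp only [tl, Matrix.of_apply, if_neg hip, if_neg hiq]
      simp [Finset.sum_ite_eq]

lemma tl_conjTranspose (p q : Fin N) (a b c d : ℂ) :
    (tl p q a b c d)ᴴ = tl p q (starRingEnd ℂ a) (starRingEnd ℂ c)
      (starRingEnd ℂ b) (starRingEnd ℂ d) := by
  ext i j
  have h1 : (starRingEnd ℂ) 1 = 1 := map_one _
  have h0 : (starRingEnd ℂ) 0 = 0 := map_zero _
  rcases eq_or_ne i j with rfl | hij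
  · simp only [Matrix.conjTranspose_apply, tl, Matrix.of_apply]
    split_ifs <;> simp_all
  · have hji := hij.symm
    simp only [Matrix.conjTranspose_apply, tl, Matrix.of_apply]
    split_ifs <;> simp_all

lemma tl_mul_tl {p q : Fin N} (hpq : p ≠ q) (a b c d a' b' c' d' : ℂ) :
    tl p q a b c d * tl p q a' b' c' d'
      = tl p q (a*a'+b*c') (a*b'+b*d') (c*a'+d*c') (c*b'+d*d') := by
  rw [tl_mul hpq]
  ext i j
  simp only [tl, Matrix.of_apply]
  split_ifs <;> simp_all <;> try ring

lemma tl_one (p q : Fin N) : tl p q 1 0 0 1 = 1 := by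
  ext i j
  simp only [tl, Matrix.of_apply, Matrix.one_apply]
  split_ifs <;> simp_all

lemma tl_mem {p q : Fin N} (hpq : p ≠ q) {a b c d : ℂ}
    (h1 : a * starRingEnd ℂ a + b * starRingEnd ℂ b = 1)
    (h2 : a * starRingEnd ℂ c + b * starRingEnd ℂ d = 0)
    (h3 : c * starRingEnd ℂ a + d * starRingEnd ℂ b = 0)
    (h4 : c * starRingEnd ℂ c + d * starRingEnd ℂ d = 1) :
    tl p q a b c d ∈ Matrix.unitaryGroup (Fin N) ℂ := by
  rw [Matrix.mem_unitaryGroup_iff]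
  show tl p q a b c d * (tl p q a b c d)ᴴ = 1
  rw [tl_conjTranspose, tl_mul_tl hpq, h1, h2, h3, h4, tl_one]

/-- `U` agrees with identity on all rows and columns with index `< r`. -/
def Hid (r : ℕ) (U : Matrix (Fin N) (Fin N) ℂ) : Prop :=
  ∀ i j : Fin N, ((i : ℕ) < r ∨ (j : ℕ) < r) → U i j = if i = j then 1 else 0

lemma Hid_mul {r : ℕ} {p q : Fin N} (hpq : p ≠ q) (hp : r ≤ (p : ℕ)) (hq : r ≤ (q : ℕ))
    (a b c d : ℂ) {U : Matrix (Fin N) (Fin N) ℂ} (hU : Hid r U) :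
    Hid r (tl p q a b c d * U) := by
  intro i j hij
  rw [tl_mul hpq]
  simp only [Matrix.of_apply]
  by_cases hip : i = p
  · have hj : (j : ℕ) < r := by
      rcases hij with h | h
      · exact absurd h (by rw [hip]; omega)
      · exact h
    have h1 : p ≠ j := by intro h; rw [← h] at hj; omega
    have h2 : q ≠ j := by intro h; rw [← h] at hj; omega
    have hij' : ¬ i = j := by rw [hip]; exact h1
    rw [if_pos hip, hU p j (Or.inr hj), hU q j (Or.inr hj), if_neg h1, if_neg h2,
      if_neg hij']
    ring
  · by_cases hiq : i = q
    · have hj : (j : ℕ) < r := by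
        rcases hij with h | h
        · exact absurd h (by rw [hiq]; omega)
        · exact h
      have h1 : p ≠ j := by intro h; rw [← h] at hj; omega
      have h2 : q ≠ j := by intro h; rw [← h] at hj; omega
      have hij' : ¬ i = j := by rw [hiq]; exact h2
      rw [if_neg hip, if_pos hiq, hU p j (Or.inr hj), hU q j (Or.inr hj), if_neg h1,
        if_neg h2, if_neg hij']
      ring
    · rw [if_neg hip, if_neg hiq, hU i j hij]

lemma col_norm {U : Matrix (Fin N) (Fin N) ℂ} (hU : U ∈ Matrix.unitaryGroup (Fin N) ℂ)
    (c : Fin N) : ∑ k, (Complex.normSq (U k c) : ℂ) = 1 := by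
  have h := Matrix.mem_unitaryGroup_iff'.mp hU
  have h2 : (star U * U) c c = (1 : Matrix (Fin N) (Fin N) ℂ) c c := by rw [h]
  rw [Matrix.mul_apply, Matrix.one_apply_eq] at h2
  rw [← h2]
  refine Finset.sum_congr rfl fun k _ => ?_
  rw [Matrix.star_apply, Complex.star_def, ← Complex.normSq_eq_conj_mul_self]

lemma row_of_col {U : Matrix (Fin N) (Fin N) ℂ} (hU : U ∈ Matrix.unitaryGroup (Fin N) ℂ)
    (c : Fin N) (hcol : ∀ i, U i c = if i = c then 1 else 0) :
    ∀ j, U c j = if c = j then 1 else 0 := by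
  intro j
  have h := Matrix.mem_unitaryGroup_iff'.mp hU
  have h2 : (star U * U) j c = (1 : Matrix (Fin N) (Fin N) ℂ) j c := by rw [h]
  rw [Matrix.mul_apply] at h2
  have h3 : ∀ k, star U j k * U k c = if k = c then star (U c j) else 0 := by
    intro k
    rw [Matrix.star_apply, hcol k]
    split_ifs with hkc
    · subst hkc; ring
    · ring
  rw [Finset.sum_congr rfl fun k _ => h3 k, Finset.sum_ite_eq', if_pos (Finset.mem_univ c)]
    at h2
  have h4 : U c j = star ((1 : Matrix (Fin N) (Fin N) ℂ) j c) := by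
    rw [← h2, star_star]
  rw [h4, Matrix.one_apply]
  split_ifs with hjc hcj hcj
  · simp
  · exact absurd hjc.symm hcj
  · exact absurd hcj.symm hjc
  · simp

set_option maxHeartbeats 1000000 in
lemma clear (r : ℕ) : ∀ (d : ℕ) (U : Matrix (Fin N) (Fin N) ℂ),
    U ∈ Matrix.unitaryGroup (Fin N) ℂ → Hid r U → ∀ (hrd : r + d < N),
    (∀ i : Fin N, r + d < (i : ℕ) → U i ⟨r, by omega⟩ = 0) →
    (d = 0 → U ⟨r, by omega⟩ ⟨r, by omega⟩ = 1) →
    ∃ L : List (Matrix (Fin N) (Fin N) ℂ), L.length = d ∧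
      (∀ M ∈ L, M ∈ Matrix.unitaryGroup (Fin N) ℂ ∧
        ∃ k, ∃ hk : k + 1 < N, IsTwoLevelOn M ⟨k, by omega⟩ ⟨k + 1, hk⟩) ∧
      ∃ U', U = L.prod * U' ∧ U' ∈ Matrix.unitaryGroup (Fin N) ℂ ∧ Hid (r + 1) U' := by
  intro d
  induction d with
  | zero =>
    intro U hU hid hrd hz hone
    refine ⟨[], rfl, by simp, U, by rw [List.prod_nil, one_mul], hU, ?_⟩
    have hcol : ∀ i, U i ⟨r, by omega⟩ = if i = ⟨r, by omega⟩ then 1 else 0 := by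
      intro i
      rcases lt_trichotomy (i : ℕ) r with h | h | h
      · exact hid i ⟨r, by omega⟩ (Or.inl h)
      · have hi : i = ⟨r, by omega⟩ := Fin.ext h
        rw [hi, if_pos rfl]
        exact hone rfl
      · have hic : i ≠ ⟨r, by omega⟩ := Fin.ne_of_val_ne (show (i:ℕ) ≠ r by omega)
        rw [if_neg hic]
        exact hz i (by omega)
    have hrow := row_of_col hU ⟨r, by omega⟩ hcol
    intro i j hij
    by_cases h1 : (i : ℕ) < r ∨ (j : ℕ) < r
    · exact hid i j h1
    · push_neg at h1
      rcases hij with h | h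
      · have hi : i = ⟨r, by omega⟩ := Fin.ext (show (i : ℕ) = r by omega)
        rw [hi]
        exact hrow j
      · have hj : j = ⟨r, by omega⟩ := Fin.ext (show (j : ℕ) = r by omega)
        rw [hj]
        exact hcol i
  | succ e ih =>
    intro U hU hid hrd hz _
    have hrdN : r + e + 1 < N := by omega
    set p : Fin N := ⟨r + e, by omega⟩ with hp
    set q : Fin N := ⟨r + e + 1, by omega⟩ with hq
    set c : Fin N := ⟨r, by omega⟩ with hc
    have hpval : (p : ℕ) = r + e := by rw [hp]
    have hqval : (q : ℕ) = r + e + 1 := by rw [hq]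
    have hcval : (c : ℕ) = r := by rw [hc]
    have hpq : p ≠ q := Fin.ne_of_val_ne (by omega)
    have hznice : ∀ i : Fin N, r + e + 1 < (i : ℕ) → U i c = 0 := fun i hi => hz i hi
    by_cases hab : U p c = 0 ∧ U q c = 0
    · have hone' : e = 0 → U c c = 1 := by
        intro he
        exfalso
        have hpc : p = c := Fin.ext (by omega)
        have hnorm := col_norm hU c
        have hzero : ∀ k : Fin N, U k c = 0 := by
          intro k
          rcases lt_trichotomy (k : ℕ) r with h | h | h
          · rw [hid k c (Or.inl h), if_neg (Fin.ne_of_val_ne (by omega))]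
          · have hk : k = c := Fin.ext (by omega)
            have h1 := hab.1
            rw [hpc] at h1
            rw [hk]
            exact h1
          · by_cases hkq : k = q
            · rw [hkq]; exact hab.2
            · refine hznice k ?_
              have hne : (k : ℕ) ≠ r + e + 1 := fun hh => hkq (Fin.ext (by omega))
              omega
        simp only [hzero, Complex.normSq_zero, Complex.ofReal_zero, Finset.sum_const_zero]
          at hnorm
        exact zero_ne_one hnorm
      have hz' : ∀ i : Fin N, r + e < (i : ℕ) → U i c = 0 := by
        intro i hi
        by_cases hiq : i = q
        · rw [hiq]; exact hab.2
        · refine hznice i ?_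
          have hne : (i : ℕ) ≠ r + e + 1 := fun hh => hiq (Fin.ext (by omega))
          omega
      obtain ⟨L', hlen, hfact, U', hUeq, hU'mem, hU'id⟩ := ih U hU hid (by omega) hz' hone'
      refine ⟨(1 : Matrix (Fin N) (Fin N) ℂ) :: L', by simp [hlen], ?_, U', ?_, hU'mem, hU'id⟩
      · intro M hM
        rcases List.mem_cons.mp hM with rfl | hM
        · exact ⟨one_mem _, r + e, hrdN, fun i j _ => Matrix.one_apply⟩
        · exact hfact M hM
      · rw [List.prod_cons, one_mul]; exact hUeq
    · obtain ⟨a, ha⟩ : ∃ x : ℂ, x = U p c := ⟨_, rfl⟩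
      obtain ⟨b, hb⟩ : ∃ x : ℂ, x = U q c := ⟨_, rfl⟩
      rw [← ha, ← hb] at hab
      obtain ⟨s, hs⟩ : ∃ x : ℝ, x = Complex.normSq a + Complex.normSq b := ⟨_, rfl⟩
      have hspos : 0 < s := by
        rcases not_and_or.mp hab with h | h
        · have h1 := Complex.normSq_pos.mpr h
          have h2 := Complex.normSq_nonneg b
          rw [hs]; linarith
        · have h1 := Complex.normSq_pos.mpr h
          have h2 := Complex.normSq_nonneg a
          rw [hs]; linarith
      obtain ⟨l, hl⟩ : ∃ x : ℝ, x = Real.sqrt s := ⟨_, rfl⟩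
      have hlpos : 0 < l := by rw [hl]; exact Real.sqrt_pos.mpr hspos
      have hl0 : (l : ℂ) ≠ 0 := Complex.ofReal_ne_zero.mpr (ne_of_gt hlpos)
      have hll : (l : ℂ) * l = (Complex.normSq a : ℂ) + (Complex.normSq b : ℂ) := by
        rw [hl, ← Complex.ofReal_mul, Real.mul_self_sqrt (le_of_lt hspos), hs]
        push_cast
        ring
      have key : (starRingEnd ℂ) a * a + (starRingEnd ℂ) b * b = (l : ℂ) * l := by
        rw [hll, ← Complex.normSq_eq_conj_mul_self, ← Complex.normSq_eq_conj_mul_self]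
      obtain ⟨G, hG⟩ : ∃ g, g = tl p q ((starRingEnd ℂ) a / l) ((starRingEnd ℂ) b / l)
          (-b / l) (a / l) := ⟨_, rfl⟩
      have hGmem : G ∈ Matrix.unitaryGroup (Fin N) ℂ := by
        rw [hG]
        refine tl_mem hpq ?_ ?_ ?_ ?_
        · simp only [map_div₀, map_neg, Complex.conj_conj, Complex.conj_ofReal]
          field_simp
          linear_combination key
        · simp only [map_div₀, map_neg, Complex.conj_conj, Complex.conj_ofReal]
          field_simp
          ring
        · simp only [map_div₀, map_neg, Complex.conj_conj, Complex.conj_ofReal]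
          field_simp
          ring
        · simp only [map_div₀, map_neg, Complex.conj_conj, Complex.conj_ofReal]
          field_simp
          linear_combination key
      obtain ⟨U1, hU1⟩ : ∃ v, v = G * U := ⟨_, rfl⟩
      have hGU : U = Gᴴ * U1 := by
        rw [hU1, ← mul_assoc]
        have hGG : Gᴴ * G = 1 := by
          rw [← Matrix.star_eq_conjTranspose]
          exact Matrix.mem_unitaryGroup_iff'.mp hGmem
        rw [hGG, one_mul]
      have hU1mem : U1 ∈ Matrix.unitaryGroup (Fin N) ℂ := by
        rw [hU1]; exact mul_mem hGmem hU
      have hU1id : Hid r U1 := by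
        rw [hU1, hG]
        exact Hid_mul hpq (by omega) (by omega) _ _ _ _ hid
      have hz1 : ∀ i : Fin N, r + e < (i : ℕ) → U1 i c = 0 := by
        intro i hi
        rw [hU1, hG, tl_mul hpq]
        simp only [Matrix.of_apply]
        have hip : ¬ i = p := by intro hh; rw [hh] at hi; omega
        rw [if_neg hip]
        by_cases hiq : i = q
        · rw [if_pos hiq, ← ha, ← hb]
          field_simp
          ring
        · rw [if_neg hiq]
          refine hznice i ?_
          have hne : (i : ℕ) ≠ r + e + 1 := fun hh => hiq (Fin.ext (by omega))
          omega
      have hone1 : e = 0 → U1 c c = 1 := by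
        intro he
        have hpc : p = c := Fin.ext (by omega)
        have hs1 : s = 1 := by
          have hnorm := col_norm hU c
          have hzero : ∀ k : Fin N, k ∉ ({p, q} : Finset (Fin N)) →
              (Complex.normSq (U k c) : ℂ) = 0 := by
            intro k hk
            simp only [Finset.mem_insert, Finset.mem_singleton, not_or] at hk
            have hUk : U k c = 0 := by
              rcases lt_or_ge (k : ℕ) r with h | h
              · rw [hid k c (Or.inl h), if_neg (Fin.ne_of_val_ne (by omega))]
              · refine hznice k ?_
                have h1 : (k : ℕ) ≠ r + e := fun hh => hk.1 (Fin.ext (by omega))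
                have h2 : (k : ℕ) ≠ r + e + 1 := fun hh => hk.2 (Fin.ext (by omega))
                omega
            rw [hUk]
            simp
          have hsub : ∑ k, (Complex.normSq (U k c) : ℂ)
              = ∑ k ∈ ({p, q} : Finset (Fin N)), (Complex.normSq (U k c) : ℂ) :=
            (Finset.sum_subset (Finset.subset_univ _) fun x _ hx => hzero x hx).symm
          rw [hsub, Finset.sum_pair hpq, ← ha, ← hb] at hnorm
          have : ((Complex.normSq a + Complex.normSq b : ℝ) : ℂ) = 1 := by
            push_cast; exact hnorm
          rw [hs]
          exact_mod_cast this
        have hl1 : l = 1 := by rw [hl, hs1, Real.sqrt_one]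
        rw [hU1, hG, tl_mul hpq]
        simp only [Matrix.of_apply]
        rw [if_pos hpc.symm, ← ha, ← hb]
        have key' : (starRingEnd ℂ) a * a + (starRingEnd ℂ) b * b = 1 := by
          rw [key, hl1]; norm_num
        rw [hl1]
        push_cast
        rw [div_one, div_one]
        linear_combination key'
      obtain ⟨L', hlen, hfact, U', hUeq, hU'mem, hU'id⟩ :=
        ih U1 hU1mem hU1id (by omega) hz1 hone1
      refine ⟨Gᴴ :: L', by simp [hlen], ?_, U', ?_, hU'mem, hU'id⟩
      · intro M hM
        rcases List.mem_cons.mp hM with rfl | hM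
        · refine ⟨by rw [← Matrix.star_eq_conjTranspose]; exact Unitary.star_mem hGmem,
            r + e, hrdN, ?_⟩
          rw [hG, tl_conjTranspose]
          exact tl_isTwoLevelOn p q _ _ _ _
        · exact hfact M hM
      · rw [List.prod_cons, mul_assoc, ← hUeq]
        exact hGU

lemma arith (e : ℕ) : e + e * (e - 1) / 2 = (e + 1) * e / 2 := by
  have h1 : e * (e - 1) / 2 = e.choose 2 := (Nat.choose_two_right e).symm
  have h2 : (e + 1) * e / 2 = (e + 1).choose 2 := by
    rw [Nat.choose_two_right]
    simp
  rw [h1, h2, Nat.choose_succ_succ, Nat.choose_one_right]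

lemma core : ∀ (d : ℕ), 2 ≤ d → ∀ r, r + d = N → ∀ U : Matrix (Fin N) (Fin N) ℂ,
    U ∈ Matrix.unitaryGroup (Fin N) ℂ → Hid r U →
    ∃ L : List (Matrix (Fin N) (Fin N) ℂ), L.length ≤ d * (d - 1) / 2 ∧ U = L.prod ∧
      ∀ M ∈ L, M ∈ Matrix.unitaryGroup (Fin N) ℂ ∧
        ∃ k, ∃ hk : k + 1 < N, IsTwoLevelOn M ⟨k, by omega⟩ ⟨k + 1, hk⟩ := by
  intro d
  induction d using Nat.strong_induction_on with
  | _ d ih =>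
    intro hd r hr U hU hid
    rcases eq_or_lt_of_le hd with he | hlt
    · refine ⟨[U], ?_, by simp, ?_⟩
      · rw [← he]; simp
      · intro M hM
        rw [List.mem_singleton] at hM
        subst hM
        refine ⟨hU, r, by omega, ?_⟩
        intro i j hij
        rcases hij with ⟨h1, h2⟩ | ⟨h1, h2⟩
        · refine hid i j (Or.inl ?_)
          have v1 : (i : ℕ) ≠ r := fun hh => h1 (Fin.ext hh)
          have v2 : (i : ℕ) ≠ r + 1 := fun hh => h2 (Fin.ext hh)
          have := i.isLt
          omega
        · refine hid i j (Or.inr ?_)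
          have v1 : (j : ℕ) ≠ r := fun hh => h1 (Fin.ext hh)
          have v2 : (j : ℕ) ≠ r + 1 := fun hh => h2 (Fin.ext hh)
          have := j.isLt
          omega
    · have hr1 : r + 1 < N := by omega
      obtain ⟨L1, hlen1, hfact1, U', hUeq, hU'mem, hU'id⟩ :=
        clear r (d - 1) U hU hid (by omega)
          (fun i hi => absurd i.isLt (by omega))
          (fun h => absurd h (by omega))
      obtain ⟨L2, hlen2, hU'eq, hfact2⟩ :=
        ih (d - 1) (by omega) (by omega) (r + 1) (by omega) U' hU'mem hU'id
      refine ⟨L1 ++ L2, ?_, ?_, ?_⟩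
      · rw [List.length_append, hlen1]
        have ha := arith (d - 1)
        have hd1 : d - 1 + 1 = d := by omega
        rw [hd1] at ha
        generalize hX : (d - 1) * (d - 1 - 1) / 2 = x at ha hlen2
        generalize hY : d * (d - 1) / 2 = y at ha ⊢
        omega
      · rw [List.prod_append, ← hU'eq]
        exact hUeq
      · intro M hM
        rcases List.mem_append.mp hM with h | h
        · exact hfact1 M h
        · exact hfact2 M h

lemma submatrix_mem_unitary {ι κ : Type*} [Fintype ι] [DecidableEq ι] [Fintype κ]
    [DecidableEq κ] (e : κ ≃ ι) {U : Matrix ι ι ℂ}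
    (hU : U ∈ Matrix.unitaryGroup ι ℂ) :
    U.submatrix ⇑e ⇑e ∈ Matrix.unitaryGroup κ ℂ := by
  rw [Matrix.mem_unitaryGroup_iff] at hU ⊢
  rw [Matrix.star_eq_conjTranspose, Matrix.conjTranspose_submatrix,
    ← Matrix.star_eq_conjTranspose, Matrix.submatrix_mul_equiv, hU,
    Matrix.submatrix_one_equiv]

end Gray

/-- Every `2^n × 2^n` unitary matrix, with rows and columns indexed by length-`n`
binary strings, is a product of at most `N(N-1)/2` `Gₙ`-unitary matrices for a
given Gray code `Gₙ = (X₁, …, X_N)`, `N = 2^n`.  Each factor differs from the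
identity only in rows and columns indexed by two consecutive Gray code entries,
which differ in exactly one position. -/
theorem unitary_eq_prod_gray_unitary (n : ℕ) (hn : 1 ≤ n)
    (X : Fin (2 ^ n) → (Fin n → Bool)) (hbij : Function.Bijective X)
    (hadj : ∀ (k : ℕ) (hk : k + 1 < 2 ^ n),
      DiffersInOnePos (X ⟨k, by omega⟩) (X ⟨k + 1, hk⟩))
    (hwrap : DiffersInOnePos
      (X ⟨2 ^ n - 1, Nat.sub_lt (by positivity) one_pos⟩)
      (X ⟨0, by positivity⟩))
    (U : Matrix (Fin n → Bool) (Fin n → Bool) ℂ)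
    (hU : U ∈ Matrix.unitaryGroup (Fin n → Bool) ℂ) :
    ∃ (m : ℕ) (_ : m ≤ 2 ^ n * (2 ^ n - 1) / 2)
      (A : Fin m → Matrix (Fin n → Bool) (Fin n → Bool) ℂ),
      U = (List.ofFn A).prod ∧
      ∀ i, A i ∈ Matrix.unitaryGroup (Fin n → Bool) ℂ ∧
        ∃ (k : ℕ) (hk : k + 1 < 2 ^ n),
          IsTwoLevelOn (A i) (X ⟨k, by omega⟩) (X ⟨k + 1, hk⟩) ∧
          DiffersInOnePos (X ⟨k, by omega⟩) (X ⟨k + 1, hk⟩) := by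
  classical
  have hN2 : 2 ≤ 2 ^ n := by
    calc 2 = 2 ^ 1 := (pow_one 2).symm
    _ ≤ 2 ^ n := Nat.pow_le_pow_right (by norm_num) hn
  let e : Fin (2 ^ n) ≃ (Fin n → Bool) := Equiv.ofBijective X hbij
  have hVmem : U.submatrix ⇑e ⇑e ∈ Matrix.unitaryGroup (Fin (2 ^ n)) ℂ :=
    Gray.submatrix_mem_unitary e hU
  obtain ⟨L, hlen, hVeq, hfact⟩ :=
    Gray.core (N := 2 ^ n) (2 ^ n) hN2 0 (by omega) (U.submatrix ⇑e ⇑e) hVmem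
      (fun i j h => by exfalso; omega)
  let φ := Matrix.reindexAlgEquiv ℂ ℂ e
  have hUeq : U = φ (U.submatrix ⇑e ⇑e) := by
    ext x y
    simp [φ, Matrix.reindexAlgEquiv_apply, Matrix.reindex_apply, Matrix.submatrix_apply]
  refine ⟨(L.map ⇑φ).length, ?_, (L.map ⇑φ).get, ?_, ?_⟩
  · rw [List.length_map]; exact hlen
  · rw [List.ofFn_get, ← map_list_prod, ← hVeq]
    exact hUeq
  · intro i
    have hmem : (L.map ⇑φ).get i ∈ L.map ⇑φ := List.get_mem _ _
    obtain ⟨M, hML, hMi⟩ := List.mem_map.mp hmem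
    obtain ⟨hMU, k, hk, hTL⟩ := hfact M hML
    have hex : ∀ (k' : ℕ) (hk' : k' < 2 ^ n), e ⟨k', hk'⟩ = X ⟨k', hk'⟩ :=
      fun k' hk' => Equiv.ofBijective_apply X hbij _
    refine ⟨?_, k, hk, ?_, hadj k hk⟩
    · rw [← hMi]
      exact Gray.submatrix_mem_unitary e.symm hMU
    · rw [← hMi]
      intro x y hxy
      have happ : (φ M) x y = M (e.symm x) (e.symm y) := rfl
      rw [happ]
      have hres : M (e.symm x) (e.symm y) = if e.symm x = e.symm y then 1 else 0 := by
        apply hTL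
        rcases hxy with ⟨h1, h2⟩ | ⟨h1, h2⟩
        · left
          constructor
          · intro hh; apply h1; rw [← hex k (by omega), ← hh, Equiv.apply_symm_apply]
          · intro hh; apply h2; rw [← hex (k + 1) hk, ← hh, Equiv.apply_symm_apply]
        · right
          constructor
          · intro hh; apply h1; rw [← hex k (by omega), ← hh, Equiv.apply_symm_apply]
          · intro hh; apply h2; rw [← hex (k + 1) hk, ← hh, Equiv.apply_symm_apply]
      rw [hres]
      simp [EmbeddingLike.apply_eq_iff_eq]
end

section
/- Let n ≥ 1. Every complex unitary matrix U whose rows and columns are indexed by length-n binary strings (equivalently, by functions Fin n → Bool) can be written as a product of at most 2^{n−1}(2^n − 1) two-level unitary matrices, each of which agrees with the identity in every entry outside the 2×2 principal submatrix indexed by a pair of binary strings x, y that differ in exactly one coordinate. Moreover, the pairs {x,y} occurring can all be taken from a fixed set of 2^n − 1 pairs (the consecutive pairs of a fixed Gray code), so the factors are fully controlled single-qubit gates drawn from 2^n − 1 classes. -/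
open Matrix Finset Complex

section Emb
variable {ι : Type*} [DecidableEq ι] [Fintype ι]

def emb (p q : ι) (a b c d : ℂ) : Matrix ι ι ℂ :=
  Matrix.of fun i j =>
    if i = p then (if j = p then a else if j = q then b else 0)
    else if i = q then (if j = p then c else if j = q then d else 0)
    else if i = j then 1 else 0

variable {p q : ι} (hpq : p ≠ q) (a b c d a' b' c' d' : ℂ)

omit [Fintype ι] in
lemma isTwoLevelOn_emb : IsTwoLevelOn (emb p q a b c d) p q := by
  intro i j h
  rcases h with ⟨h1, h2⟩ | ⟨h1, h2⟩
  · simp [emb, h1, h2]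
  · by_cases hip : i = p <;> by_cases hiq : i = q <;> by_cases hij : i = j <;>
      simp_all [emb] <;> tauto

include hpq

lemma emb_mul_apply (U : Matrix ι ι ℂ) (i j : ι) :
    (emb p q a b c d * U) i j =
      if i = p then a * U p j + b * U q j
      else if i = q then c * U p j + d * U q j
      else U i j := by
  rw [Matrix.mul_apply]
  by_cases hip : i = p
  · have step : ∀ k, emb p q a b c d i k * U k j =
        (if k = p then a * U p j else 0) + (if k = q then b * U q j else 0) := by
      intro k
      by_cases h1 : k = p <;> by_cases h2 : k = q <;>
        simp_all [emb] <;> tauto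
    rw [Finset.sum_congr rfl fun k _ => step k, Finset.sum_add_distrib]
    simp [hip]
  · by_cases hiq : i = q
    · have step : ∀ k, emb p q a b c d i k * U k j =
          (if k = p then c * U p j else 0) + (if k = q then d * U q j else 0) := by
        intro k
        by_cases h1 : k = p <;> by_cases h2 : k = q <;>
          simp_all [emb] <;> tauto
      rw [Finset.sum_congr rfl fun k _ => step k, Finset.sum_add_distrib]
      simp [hip, hiq, Ne.symm hpq]
    · have step : ∀ k, emb p q a b c d i k * U k j = if k = i then U i j else 0 := by
        intro k
        by_cases h1 : k = i <;> by_cases h2 : k = p <;> by_cases h3 : k = q <;>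
          simp_all [emb] <;> tauto
      rw [Finset.sum_congr rfl fun k _ => step k]
      simp [hip, hiq]

omit [Fintype ι] in
lemma emb_one : emb p q 1 0 0 1 = (1 : Matrix ι ι ℂ) := by
  ext i j
  by_cases h1 : i = p <;> by_cases h2 : i = q <;> by_cases h3 : j = p <;> by_cases h4 : j = q <;>
    by_cases h5 : i = j <;> simp_all [emb, Matrix.one_apply] <;> tauto

omit [Fintype ι] in
lemma star_emb : star (emb p q a b c d) =
    emb p q (starRingEnd ℂ a) (starRingEnd ℂ c) (starRingEnd ℂ b) (starRingEnd ℂ d) := by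
  ext i j
  simp only [Matrix.star_apply, emb, Matrix.of_apply, RCLike.star_def]
  by_cases h1 : i = p <;> by_cases h2 : i = q <;> by_cases h3 : j = p <;> by_cases h4 : j = q <;>
    by_cases h5 : i = j <;> simp_all [eq_comm] <;> tauto

lemma emb_mul_emb :
    emb p q a b c d * emb p q a' b' c' d' =
      emb p q (a * a' + b * c') (a * b' + b * d') (c * a' + d * c') (c * b' + d * d') := by
  ext i j
  rw [emb_mul_apply hpq]
  by_cases h1 : i = p <;> by_cases h2 : i = q <;> by_cases h3 : j = p <;> by_cases h4 : j = q <;>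
    by_cases h5 : i = j <;> simp_all [emb] <;> tauto

lemma emb_mem_unitaryGroup
    (h1 : a * starRingEnd ℂ a + b * starRingEnd ℂ b = 1)
    (h2 : a * starRingEnd ℂ c + b * starRingEnd ℂ d = 0)
    (h3 : c * starRingEnd ℂ a + d * starRingEnd ℂ b = 0)
    (h4 : c * starRingEnd ℂ c + d * starRingEnd ℂ d = 1) :
    emb p q a b c d ∈ Matrix.unitaryGroup ι ℂ := by
  rw [Matrix.mem_unitaryGroup_iff, star_emb hpq, emb_mul_emb hpq, ← emb_one (p := p) (q := q) hpq]
  rw [h1, h2, h3, h4]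

end Emb
open Complex

lemma exists_rot (x y : ℂ) :
    ∃ a b c d : ℂ,
      (a * starRingEnd ℂ a + b * starRingEnd ℂ b = 1 ∧
       a * starRingEnd ℂ c + b * starRingEnd ℂ d = 0 ∧
       c * starRingEnd ℂ a + d * starRingEnd ℂ b = 0 ∧
       c * starRingEnd ℂ c + d * starRingEnd ℂ d = 1) ∧
      a * x + b * y = (Real.sqrt (normSq x + normSq y) : ℂ) ∧
      c * x + d * y = 0 := by
  set r : ℝ := Real.sqrt (normSq x + normSq y) with hr
  by_cases h0 : x = 0 ∧ y = 0
  · refine ⟨1, 0, 0, 1, ⟨by simp, by simp, by simp, by simp⟩, ?_, by simp [h0.1, h0.2]⟩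
    simp [h0.1, h0.2, hr]
  · have hpos : 0 < normSq x + normSq y := by
      rcases not_and_or.mp h0 with h | h
      · have h1 := normSq_pos.mpr h
        have h2 := normSq_nonneg y
        linarith
      · have h1 := normSq_pos.mpr h
        have h2 := normSq_nonneg x
        linarith
    have hrpos : 0 < r := Real.sqrt_pos.mpr hpos
    have hrC : (r : ℂ) ≠ 0 := by simpa using ne_of_gt hrpos
    have hr2 : (r : ℂ) * r = x * starRingEnd ℂ x + y * starRingEnd ℂ y := by
      have h := Real.mul_self_sqrt hpos.le
      rw [Complex.mul_conj, Complex.mul_conj, ← Complex.ofReal_add, ← hr] at *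
      rw [← h]
      push_cast
      ring
    refine ⟨starRingEnd ℂ x / r, starRingEnd ℂ y / r, -y / r, x / r, ⟨?_, ?_, ?_, ?_⟩, ?_, ?_⟩
    · simp only [map_div₀, map_neg, Complex.conj_conj, Complex.conj_ofReal]
      field_simp
      linear_combination -hr2
    · simp only [map_div₀, map_neg, Complex.conj_conj, Complex.conj_ofReal]
      field_simp
      ring
    · simp only [map_div₀, map_neg, Complex.conj_conj, Complex.conj_ofReal]
      field_simp
      ring
    · simp only [map_div₀, map_neg, Complex.conj_conj, Complex.conj_ofReal]
      field_simp
      linear_combination -hr2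
    · field_simp
      linear_combination -hr2
    · field_simp
      ring

section FinDecomp
open Matrix

variable {N : ℕ}

/-- unitary and two-level on an adjacent pair -/
def AdjTwoLevel (N : ℕ) (A : Matrix (Fin N) (Fin N) ℂ) : Prop :=
  A ∈ Matrix.unitaryGroup (Fin N) ℂ ∧
  ∃ k : ℕ, ∃ h : k + 1 < N, IsTwoLevelOn A ⟨k, Nat.lt_of_succ_lt h⟩ ⟨k + 1, h⟩

lemma sum_two (f : Fin N → ℂ) (p q : Fin N) (hpq : p ≠ q)
    (h : ∀ i, i ≠ p → i ≠ q → f i = 0) : ∑ i, f i = f p + f q := by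
  rw [← Finset.sum_pair hpq]
  refine (Finset.sum_subset (Finset.subset_univ _) fun i _ hi => ?_).symm
  simp only [Finset.mem_insert, Finset.mem_singleton, not_or] at hi
  exact h i hi.1 hi.2

lemma sum_one (f : Fin N → ℂ) (p : Fin N)
    (h : ∀ i, i ≠ p → f i = 0) : ∑ i, f i = f p :=
  Finset.sum_eq_single_of_mem p (Finset.mem_univ p) fun i _ hi => h i hi

lemma col_zero (U : Matrix (Fin N) (Fin N) ℂ) (hU : U ∈ Matrix.unitaryGroup (Fin N) ℂ) (c : ℕ)
    (hcols : ∀ j : Fin N, (j : ℕ) < c → ∀ i, U i j = if i = j then 1 else 0)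
    (col j : Fin N) (hj : (j : ℕ) < c) (hcol : c ≤ (col : ℕ)) : U j col = 0 := by
  have h1 : star U * U = 1 := Matrix.mem_unitaryGroup_iff'.mp hU
  have hne : j ≠ col := by
    intro h; rw [h] at hj; omega
  have h2 : (star U * U) j col = 0 := by rw [h1]; exact Matrix.one_apply_ne hne
  rw [Matrix.mul_apply] at h2
  have step : ∀ i, (star U) j i * U i col = if i = j then U i col else 0 := by
    intro i
    rw [Matrix.star_apply, hcols j hj i]
    by_cases h : i = j <;> simp [h]
  rw [Finset.sum_congr rfl fun i _ => step i, Finset.sum_ite_eq' Finset.univ j] at h2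
  simpa using h2

lemma col_norm (U : Matrix (Fin N) (Fin N) ℂ) (hU : U ∈ Matrix.unitaryGroup (Fin N) ℂ)
    (col : Fin N) : ∑ i, starRingEnd ℂ (U i col) * U i col = 1 := by
  have h1 : star U * U = 1 := Matrix.mem_unitaryGroup_iff'.mp hU
  have h2 : (star U * U) col col = 1 := by rw [h1]; simp
  rw [Matrix.mul_apply] at h2
  simpa [Matrix.star_apply] using h2

lemma givens (k : ℕ) (hk : k + 1 < N) (col : Fin N) (U : Matrix (Fin N) (Fin N) ℂ)
    (hU : U ∈ Matrix.unitaryGroup (Fin N) ℂ) :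
    ∃ G : Matrix (Fin N) (Fin N) ℂ,
      AdjTwoLevel N (star G) ∧
      (∀ i : Fin N, (i : ℕ) ≠ k → (i : ℕ) ≠ k + 1 → ∀ j, (G * U) i j = U i j) ∧
      (∀ j, U ⟨k, Nat.lt_of_succ_lt hk⟩ j = 0 → U ⟨k + 1, hk⟩ j = 0 →
        (G * U) ⟨k, Nat.lt_of_succ_lt hk⟩ j = 0 ∧ (G * U) ⟨k + 1, hk⟩ j = 0) ∧
      (G * U) ⟨k + 1, hk⟩ col = 0 ∧
      (G * U) ⟨k, Nat.lt_of_succ_lt hk⟩ col =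
        (Real.sqrt (Complex.normSq (U ⟨k, Nat.lt_of_succ_lt hk⟩ col)
          + Complex.normSq (U ⟨k + 1, hk⟩ col)) : ℝ) ∧
      G * U ∈ Matrix.unitaryGroup (Fin N) ℂ ∧
      U = star G * (G * U) := by
  set p : Fin N := ⟨k, Nat.lt_of_succ_lt hk⟩
  set q : Fin N := ⟨k + 1, hk⟩
  have hpq : p ≠ q := by
    intro h
    have := congrArg Fin.val h
    simp [p, q] at this
  obtain ⟨a, b, c, d, ⟨h1, h2, h3, h4⟩, hval, hzero⟩ := exists_rot (U p col) (U q col)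
  refine ⟨emb p q a b c d, ?_, ?_, ?_, ?_, ?_, ?_, ?_⟩
  · constructor
    · exact Unitary.star_mem (emb_mem_unitaryGroup hpq a b c d h1 h2 h3 h4)
    · refine ⟨k, hk, ?_⟩
      rw [star_emb hpq]
      exact isTwoLevelOn_emb _ _ _ _
  · intro i hi1 hi2 j
    rw [emb_mul_apply hpq]
    have hip : i ≠ p := by intro h; apply hi1; rw [h]
    have hiq : i ≠ q := by intro h; apply hi2; rw [h]
    simp [hip, hiq]
  · intro j hp0 hq0
    constructor
    · rw [emb_mul_apply hpq]; simp [hp0, hq0]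
    · rw [emb_mul_apply hpq]; simp [hpq.symm, hp0, hq0]
  · rw [emb_mul_apply hpq]; simp [hpq.symm, hzero]
  · rw [emb_mul_apply hpq]; simp [hval]
  · exact Submonoid.mul_mem _ (emb_mem_unitaryGroup hpq a b c d h1 h2 h3 h4) hU
  · rw [← mul_assoc]
    have : star (emb p q a b c d) * emb p q a b c d = 1 :=
      Matrix.mem_unitaryGroup_iff'.mp (emb_mem_unitaryGroup hpq a b c d h1 h2 h3 h4)
    rw [this, one_mul]

end FinDecomp

section ClearCol
open Matrix

lemma clear_col (N c : ℕ) (hc : c < N) :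
    ∀ d, ∀ _ : c + 1 + d < N, ∀ U : Matrix (Fin N) (Fin N) ℂ,
    U ∈ Matrix.unitaryGroup (Fin N) ℂ →
    (∀ j : Fin N, (j : ℕ) < c → ∀ i, U i j = if i = j then 1 else 0) →
    (∀ j : Fin N, c + 1 + d < (j : ℕ) → U j ⟨c, hc⟩ = 0) →
    ∃ (L : List (Matrix (Fin N) (Fin N) ℂ)) (U' : Matrix (Fin N) (Fin N) ℂ),
      L.length = d + 1 ∧ (∀ A ∈ L, AdjTwoLevel N A) ∧ U = L.prod * U' ∧
      U' ∈ Matrix.unitaryGroup (Fin N) ℂ ∧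
      (∀ j : Fin N, (j : ℕ) < c + 1 → ∀ i, U' i j = if i = j then 1 else 0) := by
  intro d
  induction d with
  | zero =>
    intro ht U hU hcols hbelow
    set col : Fin N := ⟨c, hc⟩ with hcol
    obtain ⟨G, hGstar, hrows, hcomb, hzero, hval, hGU, hrec⟩ := givens c ht col U hU
    set p : Fin N := ⟨c, Nat.lt_of_succ_lt ht⟩ with hp
    set q : Fin N := ⟨c + 1, ht⟩ with hq
    set U' : Matrix (Fin N) (Fin N) ℂ := G * U with hU'
    -- entries of column col of U' vanish except at p
    have hU'cols : ∀ j : Fin N, (j : ℕ) < c → ∀ i, U' i j = if i = j then 1 else 0 := by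
      intro j hj i
      by_cases hi1 : (i : ℕ) = c
      · have hip : i = p := Fin.ext hi1
        have hUp : U p j = 0 := by rw [hcols j hj]; simp [Fin.ext_iff, hp]; omega
        have hUq : U q j = 0 := by rw [hcols j hj]; simp [Fin.ext_iff, hq]; omega
        have := (hcomb j hUp hUq).1
        rw [hip, this]
        have : ¬ (p = j) := by simp [Fin.ext_iff, hp]; omega
        simp [this]
      · by_cases hi2 : (i : ℕ) = c + 1
        · have hiq : i = q := Fin.ext hi2
          have hUp : U p j = 0 := by rw [hcols j hj]; simp [Fin.ext_iff, hp]; omega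
          have hUq : U q j = 0 := by rw [hcols j hj]; simp [Fin.ext_iff, hq]; omega
          have := (hcomb j hUp hUq).2
          rw [hiq, this]
          have : ¬ (q = j) := by simp [Fin.ext_iff, hq]; omega
          simp [this]
        · rw [hrows i hi1 hi2 j, hcols j hj]
    have hzerolow : ∀ i : Fin N, (i : ℕ) < c → U' i col = 0 := fun i hi =>
      col_zero U' hGU c hU'cols col i hi (by simp [hcol, hp])
    have hzerohigh : ∀ i : Fin N, c + 1 < (i : ℕ) → U' i col = 0 := by
      intro i hi
      rw [hrows i (by omega) (by omega) col]
      exact hbelow i (by omega)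
    -- all entries except p vanish
    have hexcept : ∀ i : Fin N, i ≠ p → U' i col = 0 := by
      intro i hi
      rcases lt_trichotomy (i : ℕ) c with h | h | h
      · exact hzerolow i h
      · exact absurd (Fin.ext h) hi
      · rcases Nat.lt_or_ge (c + 1) (i : ℕ) with h' | h'
        · exact hzerohigh i h'
        · have : (i : ℕ) = c + 1 := by omega
          have hiq : i = (⟨c + 1, ht⟩ : Fin N) := Fin.ext this
          rw [hiq]
          exact hzero
    -- norm of column col is 1, so the entry at p equals 1
    have hnorm := col_norm U' hGU col
    rw [sum_one _ p (fun i hi => by rw [hexcept i hi]; simp)] at hnorm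
    set r : ℝ := Real.sqrt (Complex.normSq (U p col) + Complex.normSq (U q col)) with hr
    have hrval : U' p col = (r : ℂ) := hval
    rw [hrval] at hnorm
    have hr2 : (r : ℝ) * r = 1 := by
      have : ((r * r : ℝ) : ℂ) = 1 := by push_cast; simpa using hnorm
      exact_mod_cast this
    have hrnn : 0 ≤ r := Real.sqrt_nonneg _
    have hr1 : r = 1 := by nlinarith
    have hU'col : ∀ i, U' i col = if i = col then 1 else 0 := by
      intro i
      by_cases hi : i = p
      · rw [hi, hrval, hr1]
        have : p = col := rfl
        simp [this]
      · rw [hexcept i hi]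
        have : ¬ (i = col) := hi
        simp [this]
    refine ⟨[star G], U', by simp, by simpa using hGstar, ?_, hGU, ?_⟩
    · simpa using hrec
    · intro j hj i
      rcases Nat.lt_or_ge (j : ℕ) c with h | h
      · exact hU'cols j h i
      · have hjc : (j : ℕ) = c := by omega
        have : j = col := Fin.ext (by simp [hjc, hcol, hp])
        rw [this]
        exact hU'col i
  | succ d ih =>
    intro ht U hU hcols hbelow
    set col : Fin N := ⟨c, hc⟩ with hcol
    have hk : (c + 1 + d) + 1 < N := by omega
    obtain ⟨G, hGstar, hrows, hcomb, hzero, hval, hGU, hrec⟩ := givens (c + 1 + d) hk col U hU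
    set U₁ : Matrix (Fin N) (Fin N) ℂ := G * U with hU₁
    have hcols₁ : ∀ j : Fin N, (j : ℕ) < c → ∀ i, U₁ i j = if i = j then 1 else 0 := by
      intro j hj i
      by_cases hi1 : (i : ℕ) = c + 1 + d
      · have hUp : U ⟨c + 1 + d, Nat.lt_of_succ_lt hk⟩ j = 0 := by
          rw [hcols j hj]; simp [Fin.ext_iff]; omega
        have hUq : U ⟨c + 1 + d + 1, hk⟩ j = 0 := by
          rw [hcols j hj]; simp [Fin.ext_iff]; omega
        have hip : i = (⟨c + 1 + d, Nat.lt_of_succ_lt hk⟩ : Fin N) := Fin.ext hi1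
        rw [hip, (hcomb j hUp hUq).1]
        have : ¬ ((⟨c + 1 + d, Nat.lt_of_succ_lt hk⟩ : Fin N) = j) := by
          simp [Fin.ext_iff]; omega
        simp [this]
      · by_cases hi2 : (i : ℕ) = c + 1 + d + 1
        · have hUp : U ⟨c + 1 + d, Nat.lt_of_succ_lt hk⟩ j = 0 := by
            rw [hcols j hj]; simp [Fin.ext_iff]; omega
          have hUq : U ⟨c + 1 + d + 1, hk⟩ j = 0 := by
            rw [hcols j hj]; simp [Fin.ext_iff]; omega
          have hiq : i = (⟨c + 1 + d + 1, hk⟩ : Fin N) := Fin.ext hi2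
          rw [hiq, (hcomb j hUp hUq).2]
          have : ¬ ((⟨c + 1 + d + 1, hk⟩ : Fin N) = j) := by
            simp [Fin.ext_iff]; omega
          simp [this]
        · rw [hrows i hi1 hi2 j, hcols j hj]
    have hbelow₁ : ∀ j : Fin N, c + 1 + d < (j : ℕ) → U₁ j col = 0 := by
      intro j hj
      by_cases hj1 : (j : ℕ) = c + 1 + d + 1
      · have hjq : j = (⟨c + 1 + d + 1, hk⟩ : Fin N) := Fin.ext hj1
        rw [hjq]
        exact hzero
      · rw [hrows j (by omega) hj1 col]
        exact hbelow j (by omega)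
    obtain ⟨L', U', hlen, hmem, hprod, hU'unit, hU'cols⟩ :=
      ih (by omega) U₁ hGU hcols₁ hbelow₁
    refine ⟨star G :: L', U', by simp [hlen], ?_, ?_, hU'unit, hU'cols⟩
    · intro A hA
      rcases List.mem_cons.mp hA with h | h
      · rw [h]; exact hGstar
      · exact hmem A h
    · rw [List.prod_cons, mul_assoc, ← hprod]
      exact hrec

end ClearCol

section ClearCols
open Matrix

lemma clear_cols (N : ℕ) (hN : 2 ≤ N) :
    ∀ d, 2 ≤ d → d ≤ N → ∀ U : Matrix (Fin N) (Fin N) ℂ,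
    U ∈ Matrix.unitaryGroup (Fin N) ℂ →
    (∀ j : Fin N, (j : ℕ) < N - d → ∀ i, U i j = if i = j then 1 else 0) →
    ∃ L : List (Matrix (Fin N) (Fin N) ℂ),
      2 * L.length ≤ d * (d - 1) ∧ (∀ A ∈ L, AdjTwoLevel N A) ∧ U = L.prod := by
  intro d hd2
  induction d, hd2 using Nat.le_induction with
  | base =>
    intro _ U hU hcols
    refine ⟨[U], by simp, ?_, by simp⟩
    intro A hA
    rw [List.mem_singleton.mp hA]
    refine ⟨hU, N - 2, by omega, ?_⟩
    intro i j h
    have key : ∀ (i' j' : Fin N), (j' : ℕ) < N - 2 → U i' j' = if i' = j' then 1 else 0 := by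
      intro i' j' hj'
      exact hcols j' (by omega) i'
    rcases h with ⟨h1, h2⟩ | ⟨h1, h2⟩
    · -- row i is away from the pair
      have hi : (i : ℕ) < N - 2 := by
        have e1 : (i : ℕ) ≠ N - 2 := fun h => h1 (Fin.ext h)
        have e2 : (i : ℕ) ≠ N - 2 + 1 := fun h => h2 (Fin.ext h)
        have := i.isLt
        omega
      by_cases hj : (j : ℕ) < N - 2
      · exact key i j hj
      · have hij : ¬ (i = j) := fun h => by rw [h] at hi; omega
        rw [col_zero U hU (N - 2) (fun j' hj' i' => key i' j' hj') j i hi (by omega)]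
        simp [hij]
    · have hj : (j : ℕ) < N - 2 := by
        have e1 : (j : ℕ) ≠ N - 2 := fun h => h1 (Fin.ext h)
        have e2 : (j : ℕ) ≠ N - 2 + 1 := fun h => h2 (Fin.ext h)
        have := j.isLt
        omega
      exact key i j hj
  | succ d hd ih =>
    intro hdN U hU hcols
    have hc : N - (d + 1) < N := by omega
    have ht : (N - (d + 1)) + 1 + (d - 1) < N := by omega
    obtain ⟨L₁, U', hlen₁, hmem₁, hprod₁, hU'unit, hU'cols⟩ :=
      clear_col N (N - (d + 1)) hc (d - 1) ht U hU hcols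
        (fun j hj => absurd j.isLt (by omega))
    obtain ⟨L₂, hlen₂, hmem₂, hprod₂⟩ :=
      ih (by omega) U' hU'unit (by
        intro j hj i
        exact hU'cols j (by omega) i)
    refine ⟨L₁ ++ L₂, ?_, ?_, ?_⟩
    · rw [List.length_append, hlen₁]
      have h1 : 2 * L₂.length ≤ d * (d - 1) := hlen₂
      obtain ⟨e, rfl⟩ : ∃ e, d = e + 1 := ⟨d - 1, by omega⟩
      have : (e + 1) * (e + 1 - 1) = e * e + e := by
        simp [Nat.add_sub_cancel]; ring
      rw [this] at h1
      have goal : (e + 1 + 1) * (e + 1 + 1 - 1) = e * e + 3 * e + 2 := by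
        simp [Nat.add_sub_cancel]; ring
      rw [goal]
      omega
    · intro A hA
      rcases List.mem_append.mp hA with h | h
      · exact hmem₁ A h
      · exact hmem₂ A h
    · rw [List.prod_append, ← hprod₂, ← hprod₁]

lemma fin_decomp (N : ℕ) (hN : 2 ≤ N) (U : Matrix (Fin N) (Fin N) ℂ)
    (hU : U ∈ Matrix.unitaryGroup (Fin N) ℂ) :
    ∃ L : List (Matrix (Fin N) (Fin N) ℂ),
      2 * L.length ≤ N * (N - 1) ∧ (∀ A ∈ L, AdjTwoLevel N A) ∧ U = L.prod :=
  clear_cols N hN N hN le_rfl U hU (fun j hj => by omega)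

end ClearCols

section Gray

lemma diffOne_iff {n : ℕ} (x y : Fin n → Bool) :
    DiffersInOnePos x y ↔ ∃ j, x j ≠ y j ∧ ∀ k, k ≠ j → x k = y k := by
  unfold DiffersInOnePos
  rw [Finset.card_eq_one]
  constructor
  · rintro ⟨a, ha⟩
    have hmem : ∀ k, (k ∈ Finset.univ.filter fun j => x j ≠ y j) ↔ k = a := by
      intro k; rw [ha]; simp
    refine ⟨a, ?_, ?_⟩
    · have := (hmem a).mpr rfl
      simpa using this
    · intro k hk
      have := (hmem k).not.mpr hk
      simpa using this
  · rintro ⟨a, ha, hb⟩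
    refine ⟨a, ?_⟩
    ext k
    simp only [Finset.mem_filter, Finset.mem_univ, true_and, Finset.mem_singleton]
    constructor
    · intro h
      by_contra hk
      exact h (hb k hk)
    · intro h; subst h; exact ha

lemma diffOne_symm {n : ℕ} {x y : Fin n → Bool} (h : DiffersInOnePos x y) :
    DiffersInOnePos y x := by
  rw [diffOne_iff] at h ⊢
  obtain ⟨j, h1, h2⟩ := h
  exact ⟨j, fun hh => h1 hh.symm, fun k hk => (h2 k hk).symm⟩

lemma diffOne_snoc {n : ℕ} {x y : Fin n → Bool} (b : Bool) (h : DiffersInOnePos x y) :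
    DiffersInOnePos (Fin.snoc x b) (Fin.snoc y b) := by
  rw [diffOne_iff] at h ⊢
  obtain ⟨j, h1, h2⟩ := h
  refine ⟨j.castSucc, by simpa using h1, ?_⟩
  intro k
  refine Fin.lastCases (fun _ => by simp) (fun k' hk => ?_) k
  have hne : k' ≠ j := fun h => hk (by rw [h])
  simp [Fin.snoc_castSucc, h2 k' hne]

lemma diffOne_snoc_bit {n : ℕ} (x : Fin n → Bool) :
    DiffersInOnePos (Fin.snoc x false) (Fin.snoc x true) := by
  rw [diffOne_iff]
  refine ⟨Fin.last n, by simp, ?_⟩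
  intro k
  refine Fin.lastCases (fun h => absurd rfl h) (fun k' _ => by simp) k

lemma gray_code (n : ℕ) :
    ∃ e : Fin (2 ^ n) ≃ (Fin n → Bool),
      ∀ i : ℕ, ∀ h : i + 1 < 2 ^ n,
        DiffersInOnePos (e ⟨i, Nat.lt_of_succ_lt h⟩) (e ⟨i + 1, h⟩) := by
  induction n with
  | zero =>
    haveI : Unique (Fin (2 ^ 0)) := ⟨⟨⟨0, by norm_num⟩⟩, fun a => by
      have := a.isLt
      ext
      simp only [pow_zero] at this
      omega⟩
    refine ⟨Equiv.ofUnique _ _, ?_⟩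
    intro i h
    norm_num at h
  | succ n ih =>
    obtain ⟨e, he⟩ := ih
    have h2n : 0 < 2 ^ n := Nat.pow_pos (by norm_num)
    have hlt : ∀ i : Fin (2 ^ (n + 1)), ¬ ((i : ℕ) < 2 ^ n) → 2 ^ (n + 1) - 1 - (i : ℕ) < 2 ^ n := by
      intro i hi
      have := i.isLt
      have h21 : 2 ^ (n + 1) = 2 * 2 ^ n := by ring
      omega
    set f : Fin (2 ^ (n + 1)) → (Fin (n + 1) → Bool) := fun i =>
      if h : (i : ℕ) < 2 ^ n then Fin.snoc (e ⟨i, h⟩) false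
      else Fin.snoc (e ⟨2 ^ (n + 1) - 1 - i, hlt i h⟩) true with hf
    have hsnoc_inj : ∀ (x y : Fin n → Bool) (b b' : Bool),
        (Fin.snoc x b : Fin (n + 1) → Bool) = Fin.snoc y b' → x = y ∧ b = b' := by
      intro x y b b' hxy
      constructor
      · funext k
        have := congrFun hxy k.castSucc
        simpa using this
      · have := congrFun hxy (Fin.last n)
        simpa using this
    have hinj : Function.Injective f := by
      intro i i' hii
      simp only [hf] at hii
      have hi21 : 2 ^ (n + 1) = 2 * 2 ^ n := by ring
      by_cases h1 : (i : ℕ) < 2 ^ n <;> by_cases h2 : (i' : ℕ) < 2 ^ n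
      · rw [dif_pos h1, dif_pos h2] at hii
        obtain ⟨hx, _⟩ := hsnoc_inj _ _ _ _ hii
        have := congrArg Fin.val (e.injective hx)
        ext
        simpa using this
      · rw [dif_pos h1, dif_neg h2] at hii
        exact absurd (hsnoc_inj _ _ _ _ hii).2 (by simp)
      · rw [dif_neg h1, dif_pos h2] at hii
        exact absurd (hsnoc_inj _ _ _ _ hii).2 (by simp)
      · rw [dif_neg h1, dif_neg h2] at hii
        obtain ⟨hx, _⟩ := hsnoc_inj _ _ _ _ hii
        have := congrArg Fin.val (e.injective hx)
        simp only [] at this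
        have hi := i.isLt
        have hi' := i'.isLt
        ext
        omega
    have hbij : Function.Bijective f := by
      rw [Fintype.bijective_iff_injective_and_card]
      refine ⟨hinj, ?_⟩
      rw [Fintype.card_fun]
      simp
    refine ⟨Equiv.ofBijective f hbij, ?_⟩
    intro i h
    have hi21 : 2 ^ (n + 1) = 2 * 2 ^ n := by ring
    simp only [Equiv.ofBijective_apply]
    by_cases h1 : i + 1 < 2 ^ n
    · -- both in first half
      have h0 : i < 2 ^ n := Nat.lt_of_succ_lt h1
      rw [hf]
      simp only []
      rw [dif_pos (show ((⟨i, Nat.lt_of_succ_lt h⟩ : Fin (2 ^ (n+1))) : ℕ) < 2 ^ n from h0),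
        dif_pos (show ((⟨i + 1, h⟩ : Fin (2 ^ (n+1))) : ℕ) < 2 ^ n from h1)]
      exact diffOne_snoc false (he i h1)
    · by_cases h2 : i + 1 = 2 ^ n
      · -- boundary
        have h0 : i < 2 ^ n := by omega
        have h3 : ¬ ((i + 1 : ℕ) < 2 ^ n) := by omega
        rw [hf]
        simp only []
        rw [dif_pos (show ((⟨i, Nat.lt_of_succ_lt h⟩ : Fin (2 ^ (n+1))) : ℕ) < 2 ^ n from h0),
          dif_neg (show ¬ (((⟨i + 1, h⟩ : Fin (2 ^ (n+1))) : ℕ) < 2 ^ n) from h3)]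
        have hidx : (2 ^ (n + 1) - 1 - ((⟨i + 1, h⟩ : Fin (2 ^ (n+1))) : ℕ)) = 2 ^ n - 1 := by
          simp only []
          omega
        have hidx2 : ((⟨i, Nat.lt_of_succ_lt h⟩ : Fin (2 ^ (n+1))) : ℕ) = 2 ^ n - 1 := by
          simp only []
          omega
        have : (⟨2 ^ (n + 1) - 1 - ((⟨i + 1, h⟩ : Fin (2 ^ (n+1))) : ℕ), hlt _ h3⟩ : Fin (2 ^ n))
            = ⟨i, h0⟩ := by
          ext; simp only [hidx]; omega
        rw [this]
        exact diffOne_snoc_bit _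
      · -- both in second half
        have h3 : ¬ ((i : ℕ) < 2 ^ n) := by omega
        have h4 : ¬ ((i + 1 : ℕ) < 2 ^ n) := by omega
        rw [hf]
        simp only []
        rw [dif_neg (show ¬ (((⟨i, Nat.lt_of_succ_lt h⟩ : Fin (2 ^ (n+1))) : ℕ) < 2 ^ n) from h3),
          dif_neg (show ¬ (((⟨i + 1, h⟩ : Fin (2 ^ (n+1))) : ℕ) < 2 ^ n) from h4)]
        set a : ℕ := 2 ^ (n + 1) - 1 - (i + 1) with ha
        have ha1 : a + 1 < 2 ^ n := by omega
        have hidx1 : (⟨2 ^ (n + 1) - 1 - ((⟨i, Nat.lt_of_succ_lt h⟩ : Fin (2 ^ (n+1))) : ℕ),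
            hlt _ h3⟩ : Fin (2 ^ n)) = ⟨a + 1, ha1⟩ := by
          simp only [Fin.mk.injEq]; omega
        have hidx2 : (⟨2 ^ (n + 1) - 1 - ((⟨i + 1, h⟩ : Fin (2 ^ (n+1))) : ℕ),
            hlt _ h4⟩ : Fin (2 ^ n)) = ⟨a, Nat.lt_of_succ_lt ha1⟩ := by
          simp only [Fin.mk.injEq]
          omega
        rw [hidx1, hidx2]
        exact diffOne_symm (diffOne_snoc true (he a ha1))

end Gray

section Transport
open Matrix

variable {m' n' : Type*} [Fintype m'] [DecidableEq m'] [Fintype n'] [DecidableEq n']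

lemma reindex_unitary (e : m' ≃ n') (A : Matrix m' m' ℂ)
    (hA : A ∈ Matrix.unitaryGroup m' ℂ) :
    Matrix.reindex e e A ∈ Matrix.unitaryGroup n' ℂ := by
  rw [Matrix.mem_unitaryGroup_iff'] at hA ⊢
  have hstar : star (Matrix.reindex e e A) = Matrix.reindex e e (star A) := by
    simp [Matrix.reindex_apply, Matrix.star_eq_conjTranspose, Matrix.conjTranspose_submatrix]
  rw [hstar]
  simp only [Matrix.reindex_apply]
  rw [Matrix.submatrix_mul_equiv _ _ _ e.symm _, hA, Matrix.submatrix_one_equiv]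

lemma isTwoLevelOn_reindex (e : m' ≃ n') (A : Matrix m' m' ℂ) (p q : m')
    (h : IsTwoLevelOn A p q) : IsTwoLevelOn (Matrix.reindex e e A) (e p) (e q) := by
  intro i j hij
  simp only [Matrix.reindex_apply, Matrix.submatrix_apply]
  have hcond : (e.symm i ≠ p ∧ e.symm i ≠ q) ∨ (e.symm j ≠ p ∧ e.symm j ≠ q) := by
    rcases hij with ⟨h1, h2⟩ | ⟨h1, h2⟩
    · exact Or.inl ⟨fun hh => h1 (by rw [← hh, Equiv.apply_symm_apply]),
        fun hh => h2 (by rw [← hh, Equiv.apply_symm_apply])⟩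
    · exact Or.inr ⟨fun hh => h1 (by rw [← hh, Equiv.apply_symm_apply]),
        fun hh => h2 (by rw [← hh, Equiv.apply_symm_apply])⟩
  rw [h _ _ hcond]
  by_cases hh : i = j
  · simp [hh]
  · have : ¬ (e.symm i = e.symm j) := fun h' => hh (e.symm.injective h')
    simp [hh, this]

end Transport

/-- Every quantum gate on an `n`-qubit register (a `2^n × 2^n` unitary matrix,
rows and columns indexed by length-`n` binary strings) is a product of at most
`2^(n-1)(2^n - 1)` fully controlled single-qubit gates: two-level unitary
matrices supported on pairs of binary strings differing in exactly one
coordinate, the pairs coming from a fixed set of `2^n - 1` pairs. -/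
theorem quantum_gate_eq_prod_fully_controlled (n : ℕ) (hn : 1 ≤ n)
    (U : Matrix (Fin n → Bool) (Fin n → Bool) ℂ)
    (hU : U ∈ Matrix.unitaryGroup (Fin n → Bool) ℂ) :
    ∃ S : Finset ((Fin n → Bool) × (Fin n → Bool)),
      S.card = 2 ^ n - 1 ∧
      (∀ p ∈ S, DiffersInOnePos p.1 p.2) ∧
      ∃ (m : ℕ) (_ : m ≤ 2 ^ (n - 1) * (2 ^ n - 1))
        (A : Fin m → Matrix (Fin n → Bool) (Fin n → Bool) ℂ),
        U = (List.ofFn A).prod ∧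
        ∀ i, A i ∈ Matrix.unitaryGroup (Fin n → Bool) ℂ ∧
          ∃ p ∈ S, IsTwoLevelOn (A i) p.1 p.2 := by
  classical
  set N : ℕ := 2 ^ n with hNdef
  have hN : 2 ≤ N := by
    calc 2 = 2 ^ 1 := by norm_num
    _ ≤ 2 ^ n := Nat.pow_le_pow_right (by norm_num) hn
  obtain ⟨e, he⟩ := gray_code n
  -- pull U back to Fin N
  set U₀ : Matrix (Fin N) (Fin N) ℂ := Matrix.reindex e.symm e.symm U with hU₀
  have hU₀unit : U₀ ∈ Matrix.unitaryGroup (Fin N) ℂ := reindex_unitary e.symm U hU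
  obtain ⟨L, hlen, hmem, hprod⟩ := fin_decomp N hN U₀ hU₀unit
  -- the set of pairs
  set g : Fin (2 ^ n - 1) → (Fin n → Bool) × (Fin n → Bool) := fun k =>
    (e ⟨(k : ℕ), Nat.lt_of_succ_lt (Nat.add_lt_of_lt_sub k.isLt)⟩,
     e ⟨(k : ℕ) + 1, Nat.add_lt_of_lt_sub k.isLt⟩) with hg
  have hginj : Function.Injective g := by
    intro k k' hkk
    have h1 := congrArg Prod.fst hkk
    simp only [hg] at h1
    have := congrArg Fin.val (e.injective h1)
    exact Fin.ext (by simpa using this)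
  refine ⟨Finset.image g Finset.univ, ?_, ?_, ?_⟩
  · rw [Finset.card_image_of_injective _ hginj]
    simp [hNdef]
  · intro p hp
    obtain ⟨k, _, hk⟩ := Finset.mem_image.mp hp
    rw [← hk]
    exact he k (Nat.add_lt_of_lt_sub k.isLt)
  · -- the factor list
    set Φ : Matrix (Fin N) (Fin N) ℂ → Matrix (Fin n → Bool) (Fin n → Bool) ℂ :=
      fun A => Matrix.reindex e e A with hΦ
    set L' : List (Matrix (Fin n → Bool) (Fin n → Bool) ℂ) := L.map Φ with hL'
    have hprod' : U = L'.prod := by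
      have h1 : Φ U₀ = U := by
        simp only [hΦ, hU₀, Matrix.reindex_apply, Matrix.submatrix_submatrix]
        ext i j
        simp
      have h2 : Φ (L.prod) = L'.prod := by
        have := map_list_prod (Matrix.reindexAlgEquiv ℂ ℂ e) L
        simp only [Matrix.reindexAlgEquiv_apply] at this
        convert this using 2
        all_goals rfl
      rw [← h1, hprod, h2]
    have hbound : L'.length ≤ 2 ^ (n - 1) * (2 ^ n - 1) := by
      have hpow : 2 ^ n = 2 * 2 ^ (n - 1) := by
        conv_lhs => rw [show n = (n - 1) + 1 by omega]
        ring
      have hNN : N * (N - 1) = 2 * (2 ^ (n - 1) * (2 ^ n - 1)) := by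
        rw [hNdef, hpow]
        ring
      have := hlen
      rw [hNN] at this
      have hlenL' : L'.length = L.length := by simp [hL']
      omega
    refine ⟨L'.length, hbound, L'.get, by rw [hprod', List.ofFn_get], ?_⟩
    intro i
    have hmem' : L'.get i ∈ L' := List.get_mem L' i
    obtain ⟨B, hB, hBeq⟩ := List.mem_map.mp hmem'
    obtain ⟨hBunit, k, hk, hBtl⟩ := hmem B hB
    refine ⟨by rw [← hBeq]; exact reindex_unitary e B hBunit, ?_⟩
    have hkS : k < 2 ^ n - 1 := by omega
    refine ⟨g ⟨k, hkS⟩, Finset.mem_image_of_mem g (Finset.mem_univ _), ?_⟩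
    simp only [hg]
    rw [← hBeq]
    exact isTwoLevelOn_reindex e B _ _ hBtl
end
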